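/- arXiv:2407.08854 — 5 statements merged into one kernel-verified Lean document; each statement's English description precedes it below -/
import Mathlib

section
/- Let G be a locally finite graph, x ~ y an edge, and G_{xy} the subgraph induced by the core neighborhood N_{xy} = S₁(x) ∪ S₁(y) ∪ P_{xy}, where P_{xy} = {i : d(x,i) = d(y,i) = 2}. Then for every α ∈ [0,1], the α-Ollivier-Ricci curvature of the edge x ~ y in G equals that in G_{xy}. -/
open scoped Classical BigOperators

noncomputable section

namespace OllivierRicci

variable {V : Type*}

/-- A probability measure on the vertex set, given as a nonnegative function summing to 1. -/
def IsProb (μ : V → ℝ) : Prop := (∀ x, 0 ≤ μ x) ∧ HasSum μ 1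

/-- A transport plan (coupling) between two measures. -/
def IsPlan (μ₁ μ₂ : V → ℝ) (π : V → V → ℝ) : Prop :=
  (∀ x y, 0 ≤ π x y) ∧ (∀ x, HasSum (fun y => π x y) (μ₁ x)) ∧
    (∀ y, HasSum (fun x => π x y) (μ₂ y))

/-- The transport cost of a plan with respect to the shortest-path metric. -/
def cost (G : SimpleGraph V) (π : V → V → ℝ) : ℝ :=
  ∑' p : V × V, (G.dist p.1 p.2 : ℝ) * π p.1 p.2

/-- The 1-Wasserstein distance between two measures on the vertex set. -/
def W1 (G : SimpleGraph V) (μ₁ μ₂ : V → ℝ) : ℝ :=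
  sInf {c : ℝ | ∃ π : V → V → ℝ, IsPlan μ₁ μ₂ π ∧ cost G π = c}

/-- The lazy random walk measure `μ_x^α`. -/
def mu (G : SimpleGraph V) (α : ℝ) (x : V) : V → ℝ := fun z =>
  if z = x then α else if G.Adj x z then (1 - α) / ((G.neighborSet x).ncard : ℝ) else 0

/-- The `α`-Ollivier-Ricci curvature `κ_α(x,y)`. -/
def kappaAlpha (G : SimpleGraph V) (α : ℝ) (x y : V) : ℝ :=
  1 - W1 G (mu G α x) (mu G α y) / (G.dist x y : ℝ)

/-- The Lin-Lu-Yau curvature `κ(x,y) = lim_{α → 1} κ_α(x,y)/(1-α)`. -/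
def kappa (G : SimpleGraph V) (x y : V) : ℝ :=
  Filter.limUnder (nhdsWithin (1 : ℝ) (Set.Iio 1)) fun α => kappaAlpha G α x y / (1 - α)

/-- The set of common neighbors `△(x,y)`. -/
def triangleSet (G : SimpleGraph V) (x y : V) : Set V :=
  G.neighborSet x ∩ G.neighborSet y

/-- `R_x(x,y) = S₁(x) \ (△(x,y) ∪ {y})`. -/
def RxSet (G : SimpleGraph V) (x y : V) : Set V :=
  G.neighborSet x \ (triangleSet G x y ∪ {y})

/-- `R_y(x,y) = S₁(y) \ (△(x,y) ∪ {x})`. -/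
def RySet (G : SimpleGraph V) (x y : V) : Set V :=
  G.neighborSet y \ (triangleSet G x y ∪ {x})

/-- The cost `∑_{z ∈ A} d(z, φ(z))` of an assignment `φ` on the set `A`. -/
def assignCostOf (G : SimpleGraph V) (A : Set V) (φ : V → V) : ℝ :=
  ∑ᶠ z ∈ A, (G.dist z (φ z) : ℝ)

/-- The minimal cost over all assignments (bijections) between `A` and `B`. -/
def assignCost (G : SimpleGraph V) (A B : Set V) : ℝ :=
  sInf {c : ℝ | ∃ φ : V → V, Set.BijOn φ A B ∧ assignCostOf G A φ = c}

/-- `φ` is an optimal assignment between `A` and `B`. -/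
def IsOptAssign (G : SimpleGraph V) (A B : Set V) (φ : V → V) : Prop :=
  Set.BijOn φ A B ∧ assignCostOf G A φ = assignCost G A B


/-! ### Auxiliary lemmas for the reduction to the core neighborhood -/

/-- The core neighborhood. -/
def core (G : SimpleGraph V) (x y : V) : Set V :=
  G.neighborSet x ∪ G.neighborSet y ∪ {i | G.dist x i = 2 ∧ G.dist y i = 2}

variable {G : SimpleGraph V} {x y : V} {α : ℝ}

lemma mem_core (hconn : G.Connected) (hadj : G.Adj x y) {w : V}
    (hx : G.dist x w ≤ 2) (hy : G.dist y w ≤ 2) : w ∈ core G x y := by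
  by_cases h0 : G.dist x w = 0
  · have : w = x := ((hconn.dist_eq_zero_iff).mp h0).symm
    subst this
    exact Or.inl (Or.inr hadj.symm)
  by_cases h1 : G.dist x w = 1
  · exact Or.inl (Or.inl (SimpleGraph.dist_eq_one_iff_adj.mp h1))
  have h2 : G.dist x w = 2 := by omega
  by_cases h0' : G.dist y w = 0
  · have : w = y := ((hconn.dist_eq_zero_iff).mp h0').symm
    subst this
    exact Or.inl (Or.inl hadj)
  by_cases h1' : G.dist y w = 1
  · exact Or.inl (Or.inr (SimpleGraph.dist_eq_one_iff_adj.mp h1'))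
  have h2' : G.dist y w = 2 := by omega
  exact Or.inr ⟨h2, h2'⟩

lemma core_adj {S : Set V} {a b : V} (ha : a ∈ S) (hb : b ∈ S) :
    (G.induce S).Adj ⟨a, ha⟩ ⟨b, hb⟩ ↔ G.Adj a b := by
  simp

lemma dist_core (hconn : G.Connected) (hadj : G.Adj x y) {u v : V}
    (hu : G.dist x u ≤ 1) (hv : G.dist y v ≤ 1)
    (hu' : u ∈ core G x y) (hv' : v ∈ core G x y) :
    (G.induce (core G x y)).dist ⟨u, hu'⟩ ⟨v, hv'⟩ = G.dist u v := by
  set S := core G x y with hS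
  set G' : SimpleGraph S := G.induce S with hG'
  have hxS : x ∈ S := Or.inl (Or.inr hadj.symm)
  have hyS : y ∈ S := Or.inl (Or.inl hadj)
  have hxy1 : G.dist x y = 1 := SimpleGraph.dist_eq_one_iff_adj.mpr hadj
  have hd3 : G.dist u v ≤ 3 := by
    have t1 : G.dist u v ≤ G.dist u x + G.dist x v := hconn.dist_triangle
    have t2 : G.dist x v ≤ G.dist x y + G.dist y v := hconn.dist_triangle
    have t3 : G.dist u x = G.dist x u := SimpleGraph.dist_comm
    omega
  by_cases heq : u = v
  · subst heq
    simp [SimpleGraph.dist_self]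
  · have hdpos : G.dist u v ≠ 0 := (hconn.pos_dist_of_ne heq).ne'
    have hW : ∃ W : G'.Walk ⟨u, hu'⟩ ⟨v, hv'⟩, W.length = G.dist u v := by
      by_cases h1 : G.dist u v = 1
      · have huv : G.Adj u v := SimpleGraph.dist_eq_one_iff_adj.mp h1
        exact ⟨SimpleGraph.Walk.cons ((core_adj hu' hv').mpr huv) SimpleGraph.Walk.nil, by
          simp [h1]⟩
      by_cases h2 : G.dist u v = 2
      · obtain ⟨p, hp⟩ := SimpleGraph.exists_walk_of_dist_ne_zero hdpos
        have hplen : p.length = 2 := by omega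
        set w := p.getVert 1 with hw
        have adj1 : G.Adj u w := by
          have := p.adj_getVert_succ (by omega : 0 < p.length)
          simpa using this
        have adj2 : G.Adj w v := by
          have h := p.adj_getVert_succ (by omega : 1 < p.length)
          have hgv : p.getVert 2 = v := by
            have := p.getVert_length
            rwa [hplen] at this
          rwa [hgv] at h
        have hdw1 : G.dist u w = 1 := SimpleGraph.dist_eq_one_iff_adj.mpr adj1
        have hdw2 : G.dist v w = 1 := SimpleGraph.dist_eq_one_iff_adj.mpr adj2.symm
        have hwS : w ∈ S := by
          apply mem_core hconn hadj
          · have := hconn.dist_triangle (u := x) (v := u) (w := w)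
            omega
          · have := hconn.dist_triangle (u := y) (v := v) (w := w)
            omega
        exact ⟨SimpleGraph.Walk.cons ((core_adj hu' hwS).mpr adj1)
          (SimpleGraph.Walk.cons ((core_adj hwS hv').mpr adj2) SimpleGraph.Walk.nil), by
            simp [h2]⟩
      · have h3 : G.dist u v = 3 := by omega
        have hux : u ≠ x := by
          rintro rfl
          have : G.dist u v ≤ G.dist u y + G.dist y v := hconn.dist_triangle
          omega
        have hvy : v ≠ y := by
          rintro rfl
          have t1 : G.dist u v ≤ G.dist u x + G.dist x v := hconn.dist_triangle
          have t3 : G.dist u x = G.dist x u := SimpleGraph.dist_comm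
          have t4 : G.dist x v = 1 := by rw [SimpleGraph.dist_comm]; omega
          omega
        have hxu : G.Adj x u := by
          have : G.dist x u ≠ 0 := fun h => hux ((hconn.dist_eq_zero_iff).mp h).symm
          exact SimpleGraph.dist_eq_one_iff_adj.mp (by omega)
        have hyv : G.Adj y v := by
          have : G.dist y v ≠ 0 := fun h => hvy ((hconn.dist_eq_zero_iff).mp h).symm
          exact SimpleGraph.dist_eq_one_iff_adj.mp (by omega)
        exact ⟨SimpleGraph.Walk.cons ((core_adj hu' hxS).mpr hxu.symm)
          (SimpleGraph.Walk.cons ((core_adj hxS hyS).mpr hadj)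
            (SimpleGraph.Walk.cons ((core_adj hyS hv').mpr hyv) SimpleGraph.Walk.nil)), by
              simp [h3]⟩
    obtain ⟨W, hWlen⟩ := hW
    have hle1 : G'.dist ⟨u, hu'⟩ ⟨v, hv'⟩ ≤ G.dist u v := hWlen ▸ SimpleGraph.dist_le W
    have hne' : (⟨u, hu'⟩ : S) ≠ ⟨v, hv'⟩ := by simpa [Subtype.ext_iff] using heq
    have hdz : G'.dist ⟨u, hu'⟩ ⟨v, hv'⟩ ≠ 0 :=
      SimpleGraph.dist_ne_zero_iff_ne_and_reachable.mpr ⟨hne', ⟨W⟩⟩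
    obtain ⟨Q, hQ⟩ := SimpleGraph.exists_walk_of_dist_ne_zero hdz
    have hle2 : G.dist u v ≤ G'.dist ⟨u, hu'⟩ ⟨v, hv'⟩ := by
      have h := SimpleGraph.dist_le (Q.map (SimpleGraph.Embedding.induce S).toHom)
      rwa [SimpleGraph.Walk.length_map, hQ] at h
    omega

lemma aux_neighborSet_image {S : Set V} {a : V} (ha : a ∈ S)
    (hnb : G.neighborSet a ⊆ S) :
    Subtype.val '' ((G.induce S).neighborSet ⟨a, ha⟩) = G.neighborSet a := by
  ext z
  constructor
  · rintro ⟨⟨z', hz'⟩, hadj, rfl⟩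
    simpa using hadj
  · intro hz
    exact ⟨⟨z, hnb hz⟩, by simpa using hz, rfl⟩

lemma aux_degree_eq {S : Set V} {a : V} (ha : a ∈ S) (hnb : G.neighborSet a ⊆ S) :
    ((G.induce S).neighborSet ⟨a, ha⟩).ncard = (G.neighborSet a).ncard := by
  rw [← aux_neighborSet_image ha hnb, Set.ncard_image_of_injective _ Subtype.val_injective]

lemma mu_induce {S : Set V} {a : V} (ha : a ∈ S) (hnb : G.neighborSet a ⊆ S)
    (α : ℝ) {z : V} (hz : z ∈ S) :
    mu (G.induce S) α ⟨a, ha⟩ ⟨z, hz⟩ = mu G α a z := by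
  simp only [mu, Subtype.mk.injEq, aux_degree_eq ha hnb]
  have hiff : (G.induce S).Adj ⟨a, ha⟩ ⟨z, hz⟩ ↔ G.Adj a z := by
    simp [SimpleGraph.induce, SimpleGraph.comap_adj]
  simp only [hiff]

lemma mu_dist_le {u : V} (h : mu G α x u ≠ 0) :
    G.dist x u ≤ 1 := by
  by_cases h1 : u = x
  · subst h1; simp [SimpleGraph.dist_self]
  by_cases h2 : G.Adj x u
  · rw [SimpleGraph.dist_eq_one_iff_adj.mpr h2]
  · exact absurd (by simp [mu, h1, h2]) h

lemma tsum_comp_inj {β γ : Type*} {f : β → ℝ} {g : γ → β} (hg : Function.Injective g)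
    (hf : ∀ b ∉ Set.range g, f b = 0) : ∑' c, f (g c) = ∑' b, f b := by
  by_cases h : Summable f
  · exact ((hg.hasSum_iff hf).mpr h.hasSum).tsum_eq
  · have h2 : ¬ Summable (f ∘ g) := fun ⟨a, ha⟩ => h ⟨a, (hg.hasSum_iff hf).mp ha⟩
    rw [tsum_eq_zero_of_not_summable h]
    exact tsum_eq_zero_of_not_summable h2

lemma hasSum_restrict {S : Set V} {f : V → ℝ} {a : ℝ} (hf : ∀ v ∉ S, f v = 0) :
    HasSum (fun v : S => f v) a ↔ HasSum f a :=
  hasSum_subtype_iff_of_support_subset fun v hv => by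
    by_contra h; exact hv (hf v h)

lemma W1_core (hconn : G.Connected) (hadj : G.Adj x y) (α : ℝ)
    (hxS : x ∈ core G x y) (hyS : y ∈ core G x y) :
    W1 G (mu G α x) (mu G α y) =
      W1 (G.induce (core G x y)) (mu (G.induce (core G x y)) α ⟨x, hxS⟩)
        (mu (G.induce (core G x y)) α ⟨y, hyS⟩) := by
  set S := core G x y with hSdef
  set G' : SimpleGraph S := G.induce S with hG'
  have hnbx : G.neighborSet x ⊆ S := fun z hz => Or.inl (Or.inl hz)
  have hnby : G.neighborSet y ⊆ S := fun z hz => Or.inl (Or.inr hz)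
  have hxy1 : G.dist x y = 1 := SimpleGraph.dist_eq_one_iff_adj.mpr hadj
  have hyx1 : G.dist y x = 1 := by rw [SimpleGraph.dist_comm]; exact hxy1
  have hmemx : ∀ u, mu G α x u ≠ 0 → u ∈ S := by
    intro u h
    have h1 : G.dist x u ≤ 1 := mu_dist_le h
    have h2 : G.dist y u ≤ G.dist y x + G.dist x u := hconn.dist_triangle
    exact mem_core hconn hadj (by omega) (by omega)
  have hmemy : ∀ u, mu G α y u ≠ 0 → u ∈ S := by
    intro u h
    have h1 : G.dist y u ≤ 1 := mu_dist_le h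
    have h2 : G.dist x u ≤ G.dist x y + G.dist y u := hconn.dist_triangle
    exact mem_core hconn hadj (by omega) (by omega)
  have hmux : ∀ (z : V) (hz : z ∈ S), mu G' α ⟨x, hxS⟩ ⟨z, hz⟩ = mu G α x z :=
    fun z hz => mu_induce hxS hnbx α hz
  have hmuy : ∀ (z : V) (hz : z ∈ S), mu G' α ⟨y, hyS⟩ ⟨z, hz⟩ = mu G α y z :=
    fun z hz => mu_induce hyS hnby α hz
  have hdd : ∀ (u v : V) (hu' : u ∈ S) (hv' : v ∈ S), mu G α x u ≠ 0 → mu G α y v ≠ 0 →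
      (G'.dist ⟨u, hu'⟩ ⟨v, hv'⟩ : ℝ) = (G.dist u v : ℝ) := by
    intro u v hu' hv' h1 h2
    exact congrArg (Nat.cast : ℕ → ℝ) (dist_core hconn hadj (mu_dist_le h1) (mu_dist_le h2) hu' hv')
  set g : S × S → V × V := fun q => (q.1.1, q.2.1) with hg
  have hginj : Function.Injective g := by
    rintro ⟨⟨a, ha⟩, ⟨b, hb⟩⟩ ⟨⟨c, hc⟩, ⟨d, hd⟩⟩ h
    simp only [hg, Prod.mk.injEq] at h
    simp [Prod.ext_iff, Subtype.ext_iff, h.1, h.2]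
  have hgrange : ∀ p : V × V, p ∉ Set.range g → ¬(p.1 ∈ S ∧ p.2 ∈ S) := by
    rintro p hp ⟨h1, h2⟩
    exact hp ⟨(⟨p.1, h1⟩, ⟨p.2, h2⟩), rfl⟩
  rw [W1, W1]
  congr 1
  apply Set.Subset.antisymm
  · -- from a plan in G to a plan in G'
    rintro c ⟨π, ⟨hpos, hrow, hcol⟩, rfl⟩
    have hzr : ∀ u, mu G α x u = 0 → ∀ v, π u v = 0 := by
      intro u h v
      have h1 := le_hasSum (hrow u) v (fun j _ => hpos u j)
      rw [h] at h1
      exact le_antisymm h1 (hpos u v)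
    have hzc : ∀ v, mu G α y v = 0 → ∀ u, π u v = 0 := by
      intro v h u
      have h1 := le_hasSum (hcol v) u (fun j _ => hpos j v)
      rw [h] at h1
      exact le_antisymm h1 (hpos u v)
    have hπS1 : ∀ u v, u ∉ S → π u v = 0 := by
      intro u v hu
      by_contra h
      exact hu (hmemx u (fun h0 => h (hzr u h0 v)))
    have hπS2 : ∀ u v, v ∉ S → π u v = 0 := by
      intro u v hv
      by_contra h
      exact hv (hmemy v (fun h0 => h (hzc v h0 u)))
    refine ⟨fun a b => π a.1 b.1, ⟨fun a b => hpos _ _, fun a => ?_, fun b => ?_⟩, ?_⟩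
    · rw [show mu G' α ⟨x, hxS⟩ a = mu G α x a.1 from hmux a.1 a.2]
      exact (hasSum_restrict (fun v hv => hπS2 a.1 v hv)).mpr (hrow a.1)
    · rw [show mu G' α ⟨y, hyS⟩ b = mu G α y b.1 from hmuy b.1 b.2]
      exact (hasSum_restrict (fun u hu => hπS1 u b.1 hu)).mpr (hcol b.1)
    · -- cost equality
      rw [cost, cost]
      have e1 : ∀ q : S × S, (G'.dist q.1 q.2 : ℝ) * π q.1.1 q.2.1 =
          (G.dist (g q).1 (g q).2 : ℝ) * π (g q).1 (g q).2 := by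
        intro q
        by_cases h : π q.1.1 q.2.1 = 0
        · simp [hg, h]
        · have h1 : mu G α x q.1.1 ≠ 0 := fun h0 => h (hzr _ h0 _)
          have h2 : mu G α y q.2.1 ≠ 0 := fun h0 => h (hzc _ h0 _)
          rw [hdd q.1.1 q.2.1 q.1.2 q.2.2 h1 h2]
      rw [tsum_congr e1]
      exact tsum_comp_inj (f := fun p : V × V => (G.dist p.1 p.2 : ℝ) * π p.1 p.2) hginj (by
        intro p hp
        have := hgrange p hp
        by_cases h1 : p.1 ∈ S
        · have h2 : p.2 ∉ S := fun h2 => this ⟨h1, h2⟩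
          rw [hπS2 p.1 p.2 h2, mul_zero]
        · rw [hπS1 p.1 p.2 h1, mul_zero])
  · -- from a plan in G' to a plan in G
    rintro c ⟨π', ⟨hpos, hrow, hcol⟩, rfl⟩
    set π : V → V → ℝ := fun u v =>
      if h : u ∈ S ∧ v ∈ S then π' ⟨u, h.1⟩ ⟨v, h.2⟩ else 0 with hπ
    have hπab : ∀ (a b : S), π a.1 b.1 = π' a b := by
      rintro ⟨a, ha⟩ ⟨b, hb⟩
      simp only [hπ, dif_pos (And.intro ha hb)]
    have hπ1 : ∀ u v, u ∉ S → π u v = 0 := fun u v hu => dif_neg (fun h => hu h.1)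
    have hπ2 : ∀ u v, v ∉ S → π u v = 0 := fun u v hv => dif_neg (fun h => hv h.2)
    have hzr : ∀ a : S, mu G' α ⟨x, hxS⟩ a = 0 → ∀ b, π' a b = 0 := by
      intro a h b
      have h1 := le_hasSum (hrow a) b (fun j _ => hpos a j)
      rw [h] at h1
      exact le_antisymm h1 (hpos a b)
    have hzc : ∀ b : S, mu G' α ⟨y, hyS⟩ b = 0 → ∀ a, π' a b = 0 := by
      intro b h a
      have h1 := le_hasSum (hcol b) a (fun j _ => hpos j b)
      rw [h] at h1
      exact le_antisymm h1 (hpos a b)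
    refine ⟨π, ⟨?_, ?_, ?_⟩, ?_⟩
    · intro u v
      rw [hπ]
      dsimp only
      split
      · exact hpos _ _
      · exact le_rfl
    · intro u
      by_cases hu : u ∈ S
      · rw [show mu G α x u = mu G' α ⟨x, hxS⟩ ⟨u, hu⟩ from (hmux u hu).symm]
        apply (hasSum_restrict (fun v hv => hπ2 u v hv)).mp
        have he : (fun v : S => π u v) = fun b : S => π' ⟨u, hu⟩ b :=
          funext fun b => hπab ⟨u, hu⟩ b
        rw [he]
        exact hrow ⟨u, hu⟩
      · have h1 : mu G α x u = 0 := by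
          by_contra h
          exact hu (hmemx u h)
        rw [h1, show (fun v => π u v) = fun _ => (0 : ℝ) from
          funext fun v => hπ1 u v hu]
        exact hasSum_zero
    · intro v
      by_cases hv : v ∈ S
      · rw [show mu G α y v = mu G' α ⟨y, hyS⟩ ⟨v, hv⟩ from (hmuy v hv).symm]
        apply (hasSum_restrict (fun u hu => hπ1 u v hu)).mp
        have he : (fun u : S => π u v) = fun a : S => π' a ⟨v, hv⟩ :=
          funext fun a => hπab a ⟨v, hv⟩
        rw [he]
        exact hcol ⟨v, hv⟩
      · have h1 : mu G α y v = 0 := by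
          by_contra h
          exact hv (hmemy v h)
        rw [h1, show (fun u => π u v) = fun _ => (0 : ℝ) from
          funext fun u => hπ2 u v hv]
        exact hasSum_zero
    · -- cost equality
      rw [cost, cost]
      have e0 : (∑' p : V × V, (G.dist p.1 p.2 : ℝ) * π p.1 p.2) =
          ∑' q : S × S, (G.dist (g q).1 (g q).2 : ℝ) * π (g q).1 (g q).2 := by
        refine (tsum_comp_inj (f := fun p : V × V => (G.dist p.1 p.2 : ℝ) * π p.1 p.2) hginj ?_).symm
        intro p hp
        have := hgrange p hp
        by_cases h1 : p.1 ∈ S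
        · have h2 : p.2 ∉ S := fun h2 => this ⟨h1, h2⟩
          rw [hπ2 p.1 p.2 h2, mul_zero]
        · rw [hπ1 p.1 p.2 h1, mul_zero]
      rw [e0]
      apply tsum_congr
      intro q
      rw [show π (g q).1 (g q).2 = π' q.1 q.2 from hπab q.1 q.2]
      by_cases h : π' q.1 q.2 = 0
      · simp [h]
      · have h1 : mu G' α ⟨x, hxS⟩ q.1 ≠ 0 := fun h0 => h (hzr _ h0 _)
        have h2 : mu G' α ⟨y, hyS⟩ q.2 ≠ 0 := fun h0 => h (hzc _ h0 _)
        have h1' : mu G α x q.1.1 ≠ 0 := by rwa [← hmux q.1.1 q.1.2]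
        have h2' : mu G α y q.2.1 ≠ 0 := by rwa [← hmuy q.2.1 q.2.2]
        rw [hdd q.1.1 q.2.1 q.1.2 q.2.2 h1' h2']


end OllivierRicci
/-- Reduction Lemma — the α-Ollivier-Ricci curvature of an edge only
depends on the core neighborhood. -/
theorem OllivierRicci.kappaAlpha_induce_core {V : Type*} (G : SimpleGraph V)
    (hlf : G.LocallyFinite) (hconn : G.Connected) (x y : V) (hadj : G.Adj x y)
    (α : ℝ) (hα : α ∈ Set.Icc (0 : ℝ) 1) :
    OllivierRicci.kappaAlpha G α x y =
      OllivierRicci.kappaAlpha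
        (G.induce (G.neighborSet x ∪ G.neighborSet y ∪
          {i | G.dist x i = 2 ∧ G.dist y i = 2}))
        α ⟨x, by left; right; exact hadj.symm⟩ ⟨y, by left; left; exact hadj⟩ := by
  have hxS : x ∈ OllivierRicci.core G x y := Or.inl (Or.inr hadj.symm)
  have hyS : y ∈ OllivierRicci.core G x y := Or.inl (Or.inl hadj)
  have key : OllivierRicci.kappaAlpha G α x y =
      OllivierRicci.kappaAlpha (G.induce (OllivierRicci.core G x y)) α ⟨x, hxS⟩ ⟨y, hyS⟩ := by
    rw [OllivierRicci.kappaAlpha, OllivierRicci.kappaAlpha]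
    rw [SimpleGraph.dist_eq_one_iff_adj.mpr hadj]
    rw [SimpleGraph.dist_eq_one_iff_adj.mpr
      ((OllivierRicci.core_adj hxS hyS).mpr hadj)]
    rw [OllivierRicci.W1_core hconn hadj α hxS hyS]
  exact key
end
end

section
/- Let G be a locally finite graph and x ~ y adjacent vertices of equal degree d. For every α ∈ [1/(d+1), 1], the α-Ollivier-Ricci curvature satisfies κ_α(x,y) = ((1−α)/d)·(d + 1 − inf_{φ} ∑_{z ∈ R_x(x,y)} d(z, φ(z))), where the infimum runs over all bijections φ : R_x(x,y) → R_y(x,y). -/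
open scoped Classical BigOperators

noncomputable section

namespace ORW
open OllivierRicci SimpleGraph

variable {V : Type*}

open OllivierRicci

variable {V : Type*}

lemma hasSum_ind_left (P : Prop) [Decidable P] (b : V) (c : ℝ) :
    HasSum (fun v : V => if P ∧ v = b then c else 0) (if P then c else 0) := by
  by_cases hP : P
  · have h1 : ∀ v : V, (if P ∧ v = b then c else 0) = if v = b then c else 0 := by
      intro v; by_cases hv : v = b <;> simp [hv, hP]
    rw [funext h1, if_pos hP]
    exact hasSum_ite_eq b c
  · have h1 : ∀ v : V, (if P ∧ v = b then c else 0) = 0 := by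
      intro v; rw [if_neg (fun h => hP h.1)]
    rw [funext h1, if_neg hP]
    exact hasSum_zero

lemma hasSum_ind_right (P : Prop) [Decidable P] (a : V) (c : ℝ) :
    HasSum (fun u : V => if u = a ∧ P then c else 0) (if P then c else 0) := by
  by_cases hP : P
  · have h1 : ∀ u : V, (if u = a ∧ P then c else 0) = if u = a then c else 0 := by
      intro u; by_cases hu : u = a <;> simp [hu, hP]
    rw [funext h1, if_pos hP]
    exact hasSum_ite_eq a c
  · have h1 : ∀ u : V, (if u = a ∧ P then c else 0) = 0 := by
      intro u; rw [if_neg (fun h => hP h.2)]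
    rw [funext h1, if_neg hP]
    exact hasSum_zero

lemma exists_pos_of_sum {s : Finset V} {f : V → ℝ} (h0 : ∀ a ∈ s, 0 ≤ f a)
    (hpos : 0 < ∑ a ∈ s, f a) : ∃ a ∈ s, 0 < f a := by
  by_contra h
  push_neg at h
  have : ∑ a ∈ s, f a ≤ 0 := Finset.sum_nonpos h
  linarith

section Plans

variable {μ ν : V → ℝ} {π : V → V → ℝ} {S T : Finset V}

lemma entry_le_left (h : IsPlan μ ν π) (u v : V) : π u v ≤ μ u :=
  le_hasSum (h.2.1 u) v fun j _ => h.1 u j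

lemma entry_le_right (h : IsPlan μ ν π) (u v : V) : π u v ≤ ν v :=
  le_hasSum (h.2.2 v) u fun j _ => h.1 j v

lemma plan_support (h : IsPlan μ ν π) (hμ : ∀ u ∉ S, μ u = 0) (hν : ∀ v ∉ T, ν v = 0)
    {u v : V} (hne : π u v ≠ 0) : u ∈ S ∧ v ∈ T := by
  constructor
  · by_contra hu
    exact hne (le_antisymm ((entry_le_left h u v).trans (hμ u hu).le) (h.1 u v))
  · by_contra hv
    exact hne (le_antisymm ((entry_le_right h u v).trans (hν v hv).le) (h.1 u v))

lemma plan_row (h : IsPlan μ ν π) (hμ : ∀ u ∉ S, μ u = 0) (hν : ∀ v ∉ T, ν v = 0)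
    (u : V) : ∑ v ∈ T, π u v = μ u := by
  refine HasSum.unique (hasSum_sum_of_ne_finset_zero fun v hv => ?_) (h.2.1 u)
  by_contra hne
  exact hv (plan_support h hμ hν hne).2

lemma plan_col (h : IsPlan μ ν π) (hμ : ∀ u ∉ S, μ u = 0) (hν : ∀ v ∉ T, ν v = 0)
    (v : V) : ∑ u ∈ S, π u v = ν v := by
  refine HasSum.unique (hasSum_sum_of_ne_finset_zero fun u hu => ?_) (h.2.2 v)
  by_contra hne
  exact hu (plan_support h hμ hν hne).1

lemma cost_eq (G : SimpleGraph V) (h : IsPlan μ ν π) (hμ : ∀ u ∉ S, μ u = 0)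
    (hν : ∀ v ∉ T, ν v = 0) :
    cost G π = ∑ u ∈ S, ∑ v ∈ T, (G.dist u v : ℝ) * π u v := by
  rw [cost, ← Finset.sum_product']
  refine tsum_eq_sum fun p hp => ?_
  rcases eq_or_ne (π p.1 p.2) 0 with h0 | h0
  · simp [h0]
  · exact absurd (Finset.mk_mem_product (plan_support h hμ hν h0).1
      (plan_support h hμ hν h0).2) (by simpa using hp)

end Plans

lemma sum_sum_ind {S T : Finset V} (g : V → V → ℝ) {a b : V} (ha : a ∈ S) (hb : b ∈ T)
    (c : ℝ) : ∑ u ∈ S, ∑ v ∈ T, g u v * (if u = a ∧ v = b then c else 0) = g a b * c := by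
  have : ∀ u ∈ S, ∑ v ∈ T, g u v * (if u = a ∧ v = b then c else 0)
      = if u = a then g a b * c else 0 := by
    intro u _
    by_cases hu : u = a
    · subst hu
      simp only [true_and]
      rw [Finset.sum_eq_single b]
      · simp
      · intro v _ hv; simp [hv]
      · intro hbT; exact absurd hb hbT
    · simp [hu]
  rw [Finset.sum_congr rfl this, Finset.sum_ite_eq' S a (fun _ => g a b * c)]
  simp [ha]


/-- The exchange modification of a plan. -/
def exch (π : V → V → ℝ) (a u b v : V) (ε : ℝ) : V → V → ℝ := fun p q =>
  π p q + (if p = a ∧ q = b then ε else 0) + (if p = u ∧ q = v then ε else 0)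
    - (if p = a ∧ q = v then ε else 0) - (if p = u ∧ q = b then ε else 0)

variable {μ ν : V → ℝ} {π : V → V → ℝ}

lemma exch_nonneg (h : IsPlan μ ν π) {a u b v : V} (hau : a ≠ u) (hbv : b ≠ v)
    {ε : ℝ} (hε0 : 0 ≤ ε) (hεa : ε ≤ π a v) (hεu : ε ≤ π u b) (p q : V) :
    0 ≤ exch π a u b v ε p q := by
  unfold exch
  by_cases h3 : p = a ∧ q = v
  · by_cases h4 : p = u ∧ q = b
    · exact absurd (h3.1.symm.trans h4.1) hau
    · have e1 : (if p = a ∧ q = b then ε else 0) = 0 :=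
        if_neg fun hc => hbv (hc.2.symm.trans h3.2)
      have e2 : (if p = u ∧ q = v then ε else 0) = 0 :=
        if_neg fun hc => hau (h3.1.symm.trans hc.1)
      have e3 : (if p = a ∧ q = v then ε else 0) = ε := if_pos h3
      have e4 : (if p = u ∧ q = b then ε else 0) = 0 := if_neg h4
      rw [e1, e2, e3, e4]
      have hle : ε ≤ π p q := by rw [h3.1, h3.2]; exact hεa
      linarith
  · by_cases h4 : p = u ∧ q = b
    · have e1 : (if p = a ∧ q = b then ε else 0) = 0 :=
        if_neg fun hc => hau (hc.1.symm.trans h4.1)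
      have e2 : (if p = u ∧ q = v then ε else 0) = 0 :=
        if_neg fun hc => hbv (h4.2.symm.trans hc.2)
      have e3 : (if p = a ∧ q = v then ε else 0) = 0 := if_neg h3
      have e4 : (if p = u ∧ q = b then ε else 0) = ε := if_pos h4
      rw [e1, e2, e3, e4]
      have hle : ε ≤ π p q := by rw [h4.1, h4.2]; exact hεu
      linarith
    · rw [if_neg h3, if_neg h4]
      have i1 : 0 ≤ (if p = a ∧ q = b then ε else 0) := by positivity
      have i2 : 0 ≤ (if p = u ∧ q = v then ε else 0) := by positivity
      linarith [h.1 p q]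

lemma exch_isPlan (h : IsPlan μ ν π) {a u b v : V} (hau : a ≠ u) (hbv : b ≠ v)
    {ε : ℝ} (hε0 : 0 ≤ ε) (hεa : ε ≤ π a v) (hεu : ε ≤ π u b) :
    IsPlan μ ν (exch π a u b v ε) := by
  refine ⟨exch_nonneg h hau hbv hε0 hεa hεu, fun p => ?_, fun q => ?_⟩
  · have hs := ((((h.2.1 p).add (hasSum_ind_left (p = a) b ε)).add
      (hasSum_ind_left (p = u) v ε)).sub (hasSum_ind_left (p = a) v ε)).sub
      (hasSum_ind_left (p = u) b ε)
    have : μ p + (if p = a then ε else 0) + (if p = u then ε else 0)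
        - (if p = a then ε else 0) - (if p = u then ε else 0) = μ p := by ring
    rw [this] at hs
    exact hs
  · have hs := ((((h.2.2 q).add (hasSum_ind_right (q = b) a ε)).add
      (hasSum_ind_right (q = v) u ε)).sub (hasSum_ind_right (q = v) a ε)).sub
      (hasSum_ind_right (q = b) u ε)
    have : ν q + (if q = b then ε else 0) + (if q = v then ε else 0)
        - (if q = v then ε else 0) - (if q = b then ε else 0) = ν q := by ring
    rw [this] at hs
    exact hs

lemma exch_sum {S T : Finset V} (g : V → V → ℝ) {a u b v : V} (ha : a ∈ S) (hu : u ∈ S)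
    (hb : b ∈ T) (hv : v ∈ T) (ε : ℝ) :
    ∑ p ∈ S, ∑ q ∈ T, g p q * exch π a u b v ε p q
      = (∑ p ∈ S, ∑ q ∈ T, g p q * π p q) + (g a b + g u v - g a v - g u b) * ε := by
  have expand : ∀ p ∈ S, ∀ q ∈ T, g p q * exch π a u b v ε p q
      = g p q * π p q + g p q * (if p = a ∧ q = b then ε else 0)
        + g p q * (if p = u ∧ q = v then ε else 0)
        - g p q * (if p = a ∧ q = v then ε else 0)
        - g p q * (if p = u ∧ q = b then ε else 0) := by
    intro p _ q _; unfold exch; ring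
  calc ∑ p ∈ S, ∑ q ∈ T, g p q * exch π a u b v ε p q
      = ∑ p ∈ S, ∑ q ∈ T, (g p q * π p q + g p q * (if p = a ∧ q = b then ε else 0)
        + g p q * (if p = u ∧ q = v then ε else 0)
        - g p q * (if p = a ∧ q = v then ε else 0)
        - g p q * (if p = u ∧ q = b then ε else 0)) :=
        Finset.sum_congr rfl fun p hp => Finset.sum_congr rfl fun q hq => expand p hp q hq
    _ = (∑ p ∈ S, ∑ q ∈ T, g p q * π p q)
        + (∑ p ∈ S, ∑ q ∈ T, g p q * (if p = a ∧ q = b then ε else 0))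
        + (∑ p ∈ S, ∑ q ∈ T, g p q * (if p = u ∧ q = v then ε else 0))
        - (∑ p ∈ S, ∑ q ∈ T, g p q * (if p = a ∧ q = v then ε else 0))
        - (∑ p ∈ S, ∑ q ∈ T, g p q * (if p = u ∧ q = b then ε else 0)) := by
        simp only [Finset.sum_add_distrib, Finset.sum_sub_distrib]
    _ = (∑ p ∈ S, ∑ q ∈ T, g p q * π p q) + (g a b + g u v - g a v - g u b) * ε := by
        rw [sum_sum_ind g ha hb, sum_sum_ind g hu hv, sum_sum_ind g ha hv,
          sum_sum_ind g hu hb]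
        ring


lemma sum_sum_ind' {S T : Finset V} (g : V → V → ℝ) {A : Finset V} {σ : V → V}
    (hA : A ⊆ S) (hσ : ∀ z ∈ A, σ z ∈ T) (c : ℝ) :
    ∑ p ∈ S, ∑ q ∈ T, g p q * (if p ∈ A ∧ q = σ p then c else 0)
      = ∑ z ∈ A, g z (σ z) * c := by
  have hinner : ∀ p ∈ S, ∑ q ∈ T, g p q * (if p ∈ A ∧ q = σ p then c else 0)
      = if p ∈ A then g p (σ p) * c else 0 := by
    intro p _
    by_cases hp : p ∈ A
    · simp only [hp, true_and]
      rw [Finset.sum_eq_single (σ p)]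
      · simp
      · intro q _ hq; simp [hq]
      · intro h; exact absurd (hσ p hp) h
    · simp [hp]
  rw [Finset.sum_congr rfl hinner, Finset.sum_ite_mem, Finset.inter_eq_right.mpr hA]

lemma mem_RxSet {G : SimpleGraph V} {x y z : V} :
    z ∈ RxSet G x y ↔ G.Adj x z ∧ ¬G.Adj y z ∧ z ≠ y := by
  simp only [RxSet, triangleSet, Set.mem_diff, mem_neighborSet, Set.mem_union,
    Set.mem_inter_iff, Set.mem_singleton_iff]
  tauto

lemma mem_RySet {G : SimpleGraph V} {x y z : V} :
    z ∈ RySet G x y ↔ G.Adj y z ∧ ¬G.Adj x z ∧ z ≠ x := by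
  simp only [RySet, triangleSet, Set.mem_diff, mem_neighborSet, Set.mem_union,
    Set.mem_inter_iff, Set.mem_singleton_iff]
  tauto

section Ctx

variable {G : SimpleGraph V} {x y : V}

lemma coe_RxF [Fintype (G.neighborSet x)] [Fintype (G.neighborSet y)] :
    ↑(G.neighborFinset x \ insert y (G.neighborFinset y)) = RxSet G x y := by
  ext z
  simp only [Finset.coe_sdiff, Set.mem_diff, Finset.mem_coe, mem_neighborFinset,
    Finset.mem_insert, mem_RxSet]
  tauto

lemma coe_RyF [Fintype (G.neighborSet x)] [Fintype (G.neighborSet y)] :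
    ↑(G.neighborFinset y \ insert x (G.neighborFinset x)) = RySet G x y := by
  ext z
  simp only [Finset.coe_sdiff, Set.mem_diff, Finset.mem_coe, mem_neighborFinset,
    Finset.mem_insert, mem_RySet]
  tauto

lemma card_RxF_eq [Fintype (G.neighborSet x)] [Fintype (G.neighborSet y)]
    (hadj : G.Adj x y) (hd : (G.neighborFinset x).card = (G.neighborFinset y).card) :
    (G.neighborFinset x \ insert y (G.neighborFinset y)).card
      = (G.neighborFinset y \ insert x (G.neighborFinset x)).card := by
  classical
  set Nx := G.neighborFinset x
  set Ny := G.neighborFinset y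
  have h1 : Nx ∩ insert y Ny = insert y (Nx ∩ Ny) := by
    ext z
    simp only [Finset.mem_inter, Finset.mem_insert, Nx, Ny, mem_neighborFinset]
    constructor
    · rintro ⟨hzx, hz | hzy⟩
      · exact Or.inl hz
      · exact Or.inr ⟨hzx, hzy⟩
    · rintro (rfl | ⟨hzx, hzy⟩)
      · exact ⟨hadj, Or.inl rfl⟩
      · exact ⟨hzx, Or.inr hzy⟩
  have h2 : Ny ∩ insert x Nx = insert x (Nx ∩ Ny) := by
    ext z
    simp only [Finset.mem_inter, Finset.mem_insert, Nx, Ny, mem_neighborFinset]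
    constructor
    · rintro ⟨hzy, hz | hzx⟩
      · exact Or.inl hz
      · exact Or.inr ⟨hzx, hzy⟩
    · rintro (rfl | ⟨hzx, hzy⟩)
      · exact ⟨hadj.symm, Or.inl rfl⟩
      · exact ⟨hzy, Or.inr hzx⟩
  have hy : y ∉ Nx ∩ Ny := by
    simp [Nx, Ny, mem_neighborFinset]
  have hx : x ∉ Nx ∩ Ny := by
    simp [Nx, Ny, mem_neighborFinset]
  have e1 : (Nx \ insert y Ny).card + (insert y (Nx ∩ Ny)).card = Nx.card := by
    rw [← h1]; exact Finset.card_sdiff_add_card_inter Nx (insert y Ny)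
  have e2 : (Ny \ insert x Nx).card + (insert x (Nx ∩ Ny)).card = Ny.card := by
    rw [← h2]; exact Finset.card_sdiff_add_card_inter Ny (insert x Nx)
  rw [Finset.card_insert_of_notMem hy] at e1
  rw [Finset.card_insert_of_notMem hx] at e2
  omega


end Ctx
end ORW

namespace ORW2
open OllivierRicci SimpleGraph ORW

variable {V : Type*} {G : SimpleGraph V} {x y : V}

/-- The set of achievable assignment costs. -/
def ACset (G : SimpleGraph V) (x y : V) : Set ℝ :=
  {c : ℝ | ∃ φ : V → V, Set.BijOn φ (RxSet G x y) (RySet G x y)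
    ∧ assignCostOf G (RxSet G x y) φ = c}

lemma assignCostOf_eq_sum [Fintype (G.neighborSet x)] [Fintype (G.neighborSet y)]
    (φ : V → V) :
    assignCostOf G (RxSet G x y) φ
      = ∑ z ∈ G.neighborFinset x \ insert y (G.neighborFinset y), (G.dist z (φ z) : ℝ) := by
  rw [assignCostOf, ← coe_RxF, finsum_mem_coe_finset]

lemma ACset_finite [Fintype (G.neighborSet x)] [Fintype (G.neighborSet y)] :
    (ACset G x y).Finite := by
  classical
  set RxF := G.neighborFinset x \ insert y (G.neighborFinset y) with hRxF
  set RyF := G.neighborFinset y \ insert x (G.neighborFinset x) with hRyF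
  have : ACset G x y ⊆ Set.range (fun g : ({z // z ∈ RxF} → {w // w ∈ RyF}) =>
      ∑ z ∈ RxF.attach, (G.dist z.1 (g z).1 : ℝ)) := by
    rintro c ⟨φ, hφ, rfl⟩
    have hmap : ∀ z : {z // z ∈ RxF}, φ z.1 ∈ RyF := by
      intro z
      have hz : (z : V) ∈ RxSet G x y := by
        rw [← coe_RxF (x := x) (y := y)]; exact z.2
      have := hφ.mapsTo hz
      rwa [← coe_RyF (x := x) (y := y)] at this
    refine ⟨fun z => ⟨φ z.1, hmap z⟩, ?_⟩
    rw [assignCostOf_eq_sum, ← Finset.sum_attach RxF (fun z => (G.dist z (φ z) : ℝ))]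
  exact (Set.finite_range _).subset this

lemma ACset_nonempty [Fintype (G.neighborSet x)] [Fintype (G.neighborSet y)]
    (hadj : G.Adj x y) (hd : (G.neighborFinset x).card = (G.neighborFinset y).card) :
    (ACset G x y).Nonempty := by
  classical
  set RxF := G.neighborFinset x \ insert y (G.neighborFinset y) with hRxF
  set RyF := G.neighborFinset y \ insert x (G.neighborFinset x) with hRyF
  have hcard : RxF.card = RyF.card := card_RxF_eq hadj hd
  obtain e := Finset.equivOfCardEq hcard
  set φ : V → V := fun z => if h : z ∈ RxF then (e ⟨z, h⟩ : V) else z with hφdef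
  refine ⟨assignCostOf G (RxSet G x y) φ, φ, ?_, rfl⟩
  rw [← coe_RxF (x := x) (y := y), ← coe_RyF (x := x) (y := y)]
  have hmem : ∀ z (h : z ∈ RxF), φ z = (e ⟨z, h⟩ : V) := by
    intro z h; simp only [hφdef, dif_pos h]
  constructor
  · intro z hz
    rw [hmem z hz]
    exact (e ⟨z, hz⟩).2
  constructor
  · intro z1 h1 z2 h2 heq
    rw [hmem z1 h1, hmem z2 h2] at heq
    have := e.injective (Subtype.ext heq)
    exact congrArg Subtype.val this
  · intro w hw
    refine ⟨(e.symm ⟨w, hw⟩ : V), (e.symm ⟨w, hw⟩).2, ?_⟩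
    rw [hmem _ (e.symm ⟨w, hw⟩).2]
    simp

lemma assignCost_mem [Fintype (G.neighborSet x)] [Fintype (G.neighborSet y)]
    (hadj : G.Adj x y) (hd : (G.neighborFinset x).card = (G.neighborFinset y).card) :
    assignCost G (RxSet G x y) (RySet G x y) ∈ ACset G x y :=
  (ACset_nonempty hadj hd).csInf_mem ACset_finite

lemma assignCost_le [Fintype (G.neighborSet x)] [Fintype (G.neighborSet y)]
    {φ : V → V} (hφ : Set.BijOn φ (RxSet G x y) (RySet G x y)) :
    assignCost G (RxSet G x y) (RySet G x y) ≤ assignCostOf G (RxSet G x y) φ :=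
  csInf_le ACset_finite.bddBelow ⟨φ, hφ, rfl⟩

end ORW2

namespace ORMain
open OllivierRicci SimpleGraph ORW ORW2

variable {V : Type*}

set_option maxHeartbeats 3000000 in
lemma W1_eq {G : SimpleGraph V} (hlf : G.LocallyFinite) (hconn : G.Connected)
    {x y : V} (hadj : G.Adj x y) {d : ℕ} (hdx : (G.neighborSet x).ncard = d)
    (hdy : (G.neighborSet y).ncard = d) {α : ℝ}
    (hα1 : 1 / ((d : ℝ) + 1) ≤ α) (hα2 : α ≤ 1) :
    W1 G (mu G α x) (mu G α y)
      = (α - (1 - α) / (d : ℝ))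
        + (1 - α) / (d : ℝ) * assignCost G (RxSet G x y) (RySet G x y) := by
  classical
  haveI : Fintype (G.neighborSet x) := hlf x
  haveI : Fintype (G.neighborSet y) := hlf y
  have hxy : x ≠ y := hadj.ne
  set β : ℝ := (1 - α) / (d : ℝ) with hβ
  set C : ℝ := assignCost G (RxSet G x y) (RySet G x y) with hCdef
  set Nx := G.neighborFinset x with hNxdef
  set Ny := G.neighborFinset y with hNydef
  set S : Finset V := insert x Nx with hSdef
  set T : Finset V := insert y Ny with hTdef
  set RxF : Finset V := Nx \ T with hRxFdef
  set RyF : Finset V := Ny \ S with hRyFdef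
  set Tri : Finset V := Nx ∩ Ny with hTridef
  have hyNx : y ∈ Nx := by rw [hNxdef, mem_neighborFinset]; exact hadj
  have hxNy : x ∈ Ny := by rw [hNydef, mem_neighborFinset]; exact hadj.symm
  have hxNx : x ∉ Nx := by rw [hNxdef, mem_neighborFinset]; exact G.irrefl
  have hyNy : y ∉ Ny := by rw [hNydef, mem_neighborFinset]; exact G.irrefl
  have hcardx : Nx.card = d := by
    rw [hNxdef, neighborFinset_def, ← Set.ncard_eq_toFinset_card']; exact hdx
  have hcardy : Ny.card = d := by
    rw [hNydef, neighborFinset_def, ← Set.ncard_eq_toFinset_card']; exact hdy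
  have hd0 : 0 < d := hcardx ▸ Finset.card_pos.mpr ⟨y, hyNx⟩
  have hdR : (0 : ℝ) < (d : ℝ) := by exact_mod_cast hd0
  have hβ0 : 0 ≤ β := by rw [hβ]; exact div_nonneg (by linarith) hdR.le
  have hβα : β ≤ α := by
    rw [hβ, div_le_iff₀ hdR]
    have h1 : 1 ≤ α * ((d : ℝ) + 1) := by
      rw [← div_le_iff₀ (by positivity)] at *
      · linarith [hα1]
    nlinarith
  have hμ : ∀ u, mu G α x u = if u = x then α else if u ∈ Nx then β else 0 := by
    intro u
    rw [mu, hdx]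
    by_cases hux : u = x
    · simp [hux]
    · by_cases hadjU : G.Adj x u
      · rw [if_neg hux, if_pos hadjU, if_neg hux,
          if_pos (by rw [hNxdef, mem_neighborFinset]; exact hadjU)]
      · rw [if_neg hux, if_neg hadjU, if_neg hux,
          if_neg (by rw [hNxdef, mem_neighborFinset]; exact hadjU)]
  have hν : ∀ u, mu G α y u = if u = y then α else if u ∈ Ny then β else 0 := by
    intro u
    rw [mu, hdy]
    by_cases hux : u = y
    · simp [hux]
    · by_cases hadjU : G.Adj y u
      · rw [if_neg hux, if_pos hadjU, if_neg hux,
          if_pos (by rw [hNydef, mem_neighborFinset]; exact hadjU)]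
      · rw [if_neg hux, if_neg hadjU, if_neg hux,
          if_neg (by rw [hNydef, mem_neighborFinset]; exact hadjU)]
  have hμS : ∀ u ∉ S, mu G α x u = 0 := by
    intro u hu
    rw [hSdef, Finset.mem_insert] at hu
    push_neg at hu
    rw [hμ, if_neg hu.1, if_neg hu.2]
  have hνT : ∀ u ∉ T, mu G α y u = 0 := by
    intro u hu
    rw [hTdef, Finset.mem_insert] at hu
    push_neg at hu
    rw [hν, if_neg hu.1, if_neg hu.2]
  -- membership facts
  have hTriNx : Tri ⊆ Nx := Finset.inter_subset_left
  have hTriNy : Tri ⊆ Ny := Finset.inter_subset_right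
  have hRxFNx : RxF ⊆ Nx := Finset.sdiff_subset
  have hRyFNy : RyF ⊆ Ny := Finset.sdiff_subset
  have hNxS : Nx ⊆ S := Finset.subset_insert _ _
  have hNyT : Ny ⊆ T := Finset.subset_insert _ _
  have hxS : x ∈ S := Finset.mem_insert_self _ _
  have hyT : y ∈ T := Finset.mem_insert_self _ _
  have hyS : y ∈ S := hNxS hyNx
  have hxT : x ∈ T := hNyT hxNy
  have hxTri : x ∉ Tri := fun h => hxNx (hTriNx h)
  have hyTri : y ∉ Tri := fun h => hyNy (hTriNy h)
  have hxRxF : x ∉ RxF := fun h => hxNx (hRxFNx h)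
  have hyRxF : y ∉ RxF := fun h => (Finset.mem_sdiff.mp h).2 hyT
  have hxRyF : x ∉ RyF := fun h => (Finset.mem_sdiff.mp h).2 hxS
  have hyRyF : y ∉ RyF := fun h => hyNy (hRyFNy h)
  have hRxFmem : ∀ z, z ∈ RxF ↔ z ∈ RxSet G x y := by
    intro z
    rw [← Finset.mem_coe, hRxFdef, hTdef, hNxdef, hNydef]
    rw [coe_RxF]
  have hRyFmem : ∀ z, z ∈ RyF ↔ z ∈ RySet G x y := by
    intro z
    rw [← Finset.mem_coe, hRyFdef, hSdef, hNxdef, hNydef]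
    rw [coe_RyF]
  have hTriRxF : ∀ z ∈ Tri, z ∉ RxF := by
    intro z hz hz'
    rw [hRxFmem] at hz'
    exact (mem_RxSet.mp hz').2.1 (by
      have := hTriNy hz; rw [hNydef, mem_neighborFinset] at this; exact this)
  have hTriRyF : ∀ z ∈ Tri, z ∉ RyF := by
    intro z hz hz'
    rw [hRyFmem] at hz'
    exact (mem_RySet.mp hz').2.1 (by
      have := hTriNx hz; rw [hNxdef, mem_neighborFinset] at this; exact this)
  have hNxsplit : ∀ p ∈ Nx, p ≠ x → p ≠ y → p ∉ Tri → p ∈ RxF := by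
    intro p hp hpx hpy hpT
    rw [hRxFdef, Finset.mem_sdiff, hTdef, Finset.mem_insert]
    refine ⟨hp, fun h => ?_⟩
    rcases h with h | h
    · exact hpy h
    · exact hpT (by rw [hTridef, Finset.mem_inter]; exact ⟨hp, h⟩)
  have hNysplit : ∀ q ∈ Ny, q ≠ x → q ≠ y → q ∉ Tri → q ∈ RyF := by
    intro q hq hqx hqy hqT
    rw [hRyFdef, Finset.mem_sdiff, hSdef, Finset.mem_insert]
    refine ⟨hq, fun h => ?_⟩
    rcases h with h | h
    · exact hqx h
    · exact hqT (by rw [hTridef, Finset.mem_inter]; exact ⟨h, hq⟩)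
  have hd1 : G.dist x y = 1 := dist_eq_one_iff_adj.mpr hadj
  have hcard : (G.neighborFinset x).card = (G.neighborFinset y).card := by
    rw [← hNxdef, ← hNydef, hcardx, hcardy]
  -- the optimal assignment
  obtain ⟨φ, hφbij, hφcost⟩ := assignCost_mem hadj hcard
  have hφRxF : ∀ z ∈ RxF, φ z ∈ RyF := by
    intro z hz
    rw [hRyFmem]
    exact hφbij.mapsTo ((hRxFmem z).mp hz)
  -- the transport plan witnessing the upper bound
  set π₀ : V → V → ℝ := fun p q =>
    (if p = x ∧ q = x then β else 0) + (if p = x ∧ q = y then α - β else 0)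
      + (if p = y ∧ q = y then β else 0) + (if p ∈ Tri ∧ q = p then β else 0)
      + (if p ∈ RxF ∧ q = φ p then β else 0) with hπ₀def
  have hplan₀ : IsPlan (mu G α x) (mu G α y) π₀ := by
    refine ⟨?_, ?_, ?_⟩
    · intro p q
      rw [hπ₀def]
      have h1 : (0:ℝ) ≤ if p = x ∧ q = x then β else 0 := by split <;> simp [hβ0]
      have h2 : (0:ℝ) ≤ if p = x ∧ q = y then α - β else 0 := by
        split <;> simp [sub_nonneg.mpr hβα]
      have h3 : (0:ℝ) ≤ if p = y ∧ q = y then β else 0 := by split <;> simp [hβ0]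
      have h4 : (0:ℝ) ≤ if p ∈ Tri ∧ q = p then β else 0 := by split <;> simp [hβ0]
      have h5 : (0:ℝ) ≤ if p ∈ RxF ∧ q = φ p then β else 0 := by split <;> simp [hβ0]
      dsimp only
      linarith
    · intro p
      have hs := ((((hasSum_ind_left (p = x) x β).add
        (hasSum_ind_left (p = x) y (α - β))).add
        (hasSum_ind_left (p = y) y β)).add
        (hasSum_ind_left (p ∈ Tri) p β)).add
        (hasSum_ind_left (p ∈ RxF) (φ p) β)
      convert hs using 1
      rw [hμ]
      symm
      by_cases hpx : p = x
      · subst hpx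
        rw [if_pos rfl, if_pos rfl, if_pos rfl, if_neg hxy, if_neg hxTri, if_neg hxRxF]
        ring
      · rw [if_neg hpx, if_neg hpx, if_neg hpx]
        by_cases hpN : p ∈ Nx
        · rw [if_pos hpN]
          by_cases hpy : p = y
          · subst hpy
            rw [if_pos rfl, if_neg hyTri, if_neg hyRxF]; ring
          · rw [if_neg hpy]
            by_cases hpT : p ∈ Tri
            · rw [if_pos hpT, if_neg (hTriRxF p hpT)]; ring
            · rw [if_neg hpT, if_pos (hNxsplit p hpN hpx hpy hpT)]; ring
        · rw [if_neg hpN, if_neg (fun h => hpN (by rw [h]; exact hyNx)), if_neg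
            (fun h => hpN (hTriNx h)), if_neg (fun h => hpN (hRxFNx h))]
          ring
    · intro q
      have h4eq : (fun p => if p ∈ Tri ∧ q = p then β else 0)
          = fun p => if p = q ∧ q ∈ Tri then β else 0 := by
        funext p
        by_cases hpq : p = q
        · subst hpq; by_cases hpT : p ∈ Tri <;> simp [hpT]
        · rw [if_neg (fun h => hpq h.2.symm), if_neg (fun h => hpq h.1)]
      have h5 : HasSum (fun p => if p ∈ RxF ∧ q = φ p then β else 0)
          (if q ∈ RySet G x y then β else 0) := by
        by_cases hq : q ∈ RySet G x y
        · obtain ⟨z, hz, hzq⟩ := hφbij.surjOn hq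
          have hzF : z ∈ RxF := (hRxFmem z).mpr hz
          have heq : (fun p => if p ∈ RxF ∧ q = φ p then β else 0)
              = fun p => if p = z then β else 0 := by
            funext p
            by_cases hpz : p = z
            · subst hpz; rw [if_pos ⟨hzF, hzq.symm⟩, if_pos rfl]
            · rw [if_neg ?_, if_neg hpz]
              rintro ⟨hpF, hpq⟩
              exact hpz (hφbij.injOn ((hRxFmem p).mp hpF) hz (by rw [← hpq, hzq]))
          rw [heq, if_pos hq]
          exact hasSum_ite_eq z β
        · have heq : (fun p => if p ∈ RxF ∧ q = φ p then β else 0) = fun _ => (0:ℝ) := by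
            funext p
            rw [if_neg]
            rintro ⟨hpF, hpq⟩
            exact hq (hpq ▸ ((hRyFmem (φ p)).mp (hφRxF p hpF)))
          rw [heq, if_neg hq]
          exact hasSum_zero
      have h4 : HasSum (fun p => if p ∈ Tri ∧ q = p then β else 0)
          (if q ∈ Tri then β else 0) := by
        rw [h4eq]; exact hasSum_ind_right (q ∈ Tri) q β
      have hs := ((((hasSum_ind_right (q = x) x β).add
        (hasSum_ind_right (q = y) x (α - β))).add
        (hasSum_ind_right (q = y) y β)).add h4).add h5
      convert hs using 1
      rw [hν]
      symm
      by_cases hqy : q = y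
      · subst hqy
        rw [if_pos rfl, if_pos rfl, if_pos rfl, if_neg (Ne.symm hxy), if_neg hyTri,
          if_neg (fun h => G.irrefl (mem_RySet.mp h).1)]
        ring
      · rw [if_neg hqy, if_neg hqy, if_neg hqy]
        by_cases hqN : q ∈ Ny
        · rw [if_pos hqN]
          by_cases hqx : q = x
          · subst hqx
            rw [if_pos rfl, if_neg hxTri,
              if_neg (fun h => (mem_RySet.mp h).2.2 rfl)]
            ring
          · rw [if_neg hqx]
            by_cases hqT : q ∈ Tri
            · have e : (if q ∈ RySet G x y then β else 0) = 0 :=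
                if_neg (fun h => (mem_RySet.mp h).2.1 (by
                  have := hTriNx hqT
                  rw [hNxdef, mem_neighborFinset] at this
                  exact this))
              rw [if_pos hqT, e]
              ring
            · rw [if_neg hqT,
                if_pos ((hRyFmem q).mp (hNysplit q hqN hqx hqy hqT))]
              ring
        · rw [if_neg hqN, if_neg (fun h => hqN (by rw [h]; exact hxNy)),
            if_neg (fun h => hqN (hTriNy h)),
            if_neg (fun h => hqN (by
              have := (mem_RySet.mp h).1
              rw [hNydef, mem_neighborFinset]; exact this))]
          ring
  have hcost₀ : cost G π₀ = (α - β) + β * C := by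
    rw [cost_eq G hplan₀ hμS hνT]
    have expand : ∀ p ∈ S, ∀ q ∈ T, (G.dist p q : ℝ) * π₀ p q
        = (G.dist p q : ℝ) * (if p = x ∧ q = x then β else 0)
          + (G.dist p q : ℝ) * (if p = x ∧ q = y then α - β else 0)
          + (G.dist p q : ℝ) * (if p = y ∧ q = y then β else 0)
          + (G.dist p q : ℝ) * (if p ∈ Tri ∧ q = p then β else 0)
          + (G.dist p q : ℝ) * (if p ∈ RxF ∧ q = φ p then β else 0) := by
      intro p _ q _; rw [hπ₀def]; ring
    rw [Finset.sum_congr rfl fun p hp => Finset.sum_congr rfl fun q hq => expand p hp q hq]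
    simp only [Finset.sum_add_distrib]
    rw [sum_sum_ind _ hxS hxT, sum_sum_ind _ hxS hyT, sum_sum_ind _ hyS hyT,
      sum_sum_ind' _ (hTriNx.trans hNxS) (fun z hz => hNyT (hTriNy hz)),
      sum_sum_ind' _ (hRxFNx.trans hNxS) (fun z hz => hNyT (hRyFNy (hφRxF z hz)))]
    have e1 : (G.dist x x : ℝ) = 0 := by simp [SimpleGraph.dist_self]
    have e2 : (G.dist y y : ℝ) = 0 := by simp [SimpleGraph.dist_self]
    have e3 : (G.dist x y : ℝ) = 1 := by rw [hd1]; norm_num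
    have e4 : ∑ z ∈ Tri, (G.dist z z : ℝ) * β = 0 := by
      apply Finset.sum_eq_zero; intro z _; simp [SimpleGraph.dist_self]
    have e5 : ∑ z ∈ RxF, (G.dist z (φ z) : ℝ) * β = C * β := by
      rw [← Finset.sum_mul]
      congr 1
      rw [hCdef, ← hφcost, assignCostOf_eq_sum]
    rw [e1, e2, e3, e4, e5]
    ring
  -- lower bound
  have hlow : ∀ π, IsPlan (mu G α x) (mu G α y) π → (α - β) + β * C ≤ cost G π := by
    have hμ1 : ∀ u, mu G α x u ≤ 1 := by
      intro u
      rw [hμ]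
      split
      · exact hα2
      split
      · exact hβα.trans hα2
      · norm_num
    have hν1 : ∀ u, mu G α y u ≤ 1 := by
      intro u
      rw [hν]
      split
      · exact hα2
      split
      · exact hβα.trans hα2
      · norm_num
    -- the function-space framework
    set F : (V → V → ℝ) → ℝ :=
      fun π => ∑ p ∈ S, ∑ q ∈ T, (G.dist p q : ℝ) * π p q with hFdef
    set w : V → V → ℝ := fun p q =>
      if p = x ∧ q = x then 2 else if p = y ∧ q = y then 2
        else if p ∈ Tri ∧ q = p then 2 else if p = x ∧ q = y then 1 else 0 with hwdef
    set Df : (V → V → ℝ) → ℝ :=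
      fun π => ∑ p ∈ S, ∑ q ∈ T, w p q * π p q with hDfdef
    have hw0 : ∀ p q, 0 ≤ w p q := by
      intro p q
      rw [hwdef]
      dsimp only
      split_ifs <;> norm_num
    set Pc : Set (V → V → ℝ) := {π | (∀ p q, 0 ≤ π p q)
      ∧ (∀ p q, (p ∉ S ∨ q ∉ T) → π p q = 0)
      ∧ (∀ p, ∑ q ∈ T, π p q = mu G α x p)
      ∧ (∀ q, ∑ p ∈ S, π p q = mu G α y q)} with hPcdef
    have hPcPlan : ∀ π, π ∈ Pc ↔ IsPlan (mu G α x) (mu G α y) π := by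
      intro π
      constructor
      · rintro ⟨h1, h2, h3, h4⟩
        refine ⟨h1, fun p => ?_, fun q => ?_⟩
        · have := hasSum_sum_of_ne_finset_zero (f := fun q => π p q) (s := T) (L := SummationFilter.unconditional _)
            (fun q hq => h2 p q (Or.inr hq))
          rwa [h3 p] at this
        · have := hasSum_sum_of_ne_finset_zero (f := fun p => π p q) (s := S) (L := SummationFilter.unconditional _)
            (fun p hp => h2 p q (Or.inl hp))
          rwa [h4 q] at this
      · intro h
        exact ⟨h.1, fun p q hpq => by
          rcases hpq with hp | hq
          · by_contra hne
            exact hp (plan_support h hμS hνT hne).1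
          · by_contra hne
            exact hq (plan_support h hμS hνT hne).2,
          fun p => plan_row h hμS hνT p, fun q => plan_col h hμS hνT q⟩
    have hev : ∀ p q, Continuous (fun π : V → V → ℝ => π p q) :=
      fun p q => (continuous_apply q).comp (continuous_apply p)
    have hFcont : Continuous F := by
      rw [hFdef]
      exact continuous_finset_sum S fun p _ =>
        continuous_finset_sum T fun q _ => (continuous_const.mul (hev p q))
    have hDfcont : Continuous Df := by
      rw [hDfdef]
      exact continuous_finset_sum S fun p _ =>
        continuous_finset_sum T fun q _ => (continuous_const.mul (hev p q))
    have hPcclosed : IsClosed Pc := by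
      rw [hPcdef]
      have c1 : IsClosed {π : V → V → ℝ | ∀ p q, 0 ≤ π p q} := by
        rw [Set.setOf_forall]
        refine isClosed_iInter fun p => ?_
        rw [Set.setOf_forall]
        exact isClosed_iInter fun q => isClosed_le continuous_const (hev p q)
      have c2 : IsClosed {π : V → V → ℝ | ∀ p q, (p ∉ S ∨ q ∉ T) → π p q = 0} := by
        rw [Set.setOf_forall]
        refine isClosed_iInter fun p => ?_
        rw [Set.setOf_forall]
        refine isClosed_iInter fun q => ?_
        by_cases hpq : p ∉ S ∨ q ∉ T
        · have : {π : V → V → ℝ | (p ∉ S ∨ q ∉ T) → π p q = 0}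
              = {π : V → V → ℝ | π p q = 0} := by
            ext π; simp [hpq]
          rw [this]
          exact isClosed_eq (hev p q) continuous_const
        · have : {π : V → V → ℝ | (p ∉ S ∨ q ∉ T) → π p q = 0} = Set.univ := by
            ext π; simp [hpq]
          rw [this]
          exact isClosed_univ
      have c3 : IsClosed {π : V → V → ℝ | ∀ p, ∑ q ∈ T, π p q = mu G α x p} := by
        rw [Set.setOf_forall]
        exact isClosed_iInter fun p => isClosed_eq
          (continuous_finset_sum T fun q _ => hev p q) continuous_const
      have c4 : IsClosed {π : V → V → ℝ | ∀ q, ∑ p ∈ S, π p q = mu G α y q} := by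
        rw [Set.setOf_forall]
        exact isClosed_iInter fun q => isClosed_eq
          (continuous_finset_sum S fun p _ => hev p q) continuous_const
      have : {π : V → V → ℝ | (∀ p q, 0 ≤ π p q)
          ∧ (∀ p q, (p ∉ S ∨ q ∉ T) → π p q = 0)
          ∧ (∀ p, ∑ q ∈ T, π p q = mu G α x p)
          ∧ (∀ q, ∑ p ∈ S, π p q = mu G α y q)}
          = {π : V → V → ℝ | ∀ p q, 0 ≤ π p q}
            ∩ ({π : V → V → ℝ | ∀ p q, (p ∉ S ∨ q ∉ T) → π p q = 0}
            ∩ ({π : V → V → ℝ | ∀ p, ∑ q ∈ T, π p q = mu G α x p}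
            ∩ {π : V → V → ℝ | ∀ q, ∑ p ∈ S, π p q = mu G α y q})) := by
        ext π
        simp only [Set.mem_setOf_eq, Set.mem_inter_iff]
      rw [this]
      exact c1.inter (c2.inter (c3.inter c4))
    have hPccompact : IsCompact Pc := by
      refine IsCompact.of_isClosed_subset (isCompact_univ_pi fun _ =>
        isCompact_univ_pi fun _ => isCompact_Icc (a := (0:ℝ)) (b := 1)) hPcclosed ?_
      intro π hπ
      rw [hPcPlan] at hπ
      rw [Set.mem_pi]
      intro p _
      rw [Set.mem_pi]
      intro q _
      rw [Set.mem_Icc]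
      exact ⟨hπ.1 p q, (entry_le_left hπ p q).trans (hμ1 p)⟩
    have hPcne : Pc.Nonempty := ⟨π₀, (hPcPlan π₀).mpr hplan₀⟩
    obtain ⟨π₁, hπ₁Pc, hπ₁min⟩ := hPccompact.exists_isMinOn hPcne hFcont.continuousOn
    set Q : Set (V → V → ℝ) := Pc ∩ {π | F π = F π₁} with hQdef
    have hQcompact : IsCompact Q :=
      hPccompact.inter_right (isClosed_eq hFcont continuous_const)
    have hQne : Q.Nonempty := ⟨π₁, hπ₁Pc, rfl⟩
    obtain ⟨π₂, hπ₂Q, hπ₂max⟩ := hQcompact.exists_isMaxOn hQne hDfcont.continuousOn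
    have hπ₂Pc : π₂ ∈ Pc := hπ₂Q.1
    have plan₂ : IsPlan (mu G α x) (mu G α y) π₂ := (hPcPlan π₂).mp hπ₂Pc
    have nn₂ : ∀ p q, 0 ≤ π₂ p q := plan₂.1
    have row₂ : ∀ p, ∑ q ∈ T, π₂ p q = mu G α x p := fun p => plan_row plan₂ hμS hνT p
    have col₂ : ∀ q, ∑ p ∈ S, π₂ p q = mu G α y q := fun q => plan_col plan₂ hμS hνT q
    have hFπ₂ : F π₂ = F π₁ := hπ₂Q.2
    -- the exchange step engine
    have step : ∀ a u b v : V, a ∈ S → u ∈ S → b ∈ T → v ∈ T → a ≠ u → b ≠ v →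
        0 < π₂ a v → 0 < π₂ u b →
        ((G.dist a b : ℝ) + (G.dist u v : ℝ) - (G.dist a v : ℝ) - (G.dist u b : ℝ) ≤ 0) →
        (0 < w a b + w u v - w a v - w u b) → False := by
      intro a u b v haS huS hbT hvT hau hbv hav hub hcost hD
      set ε := min (π₂ a v) (π₂ u b) with hε
      have hε0 : 0 < ε := lt_min hav hub
      have hplan' := exch_isPlan plan₂ hau hbv hε0.le (min_le_left _ _) (min_le_right _ _)
      set π' := exch π₂ a u b v ε with hπ'def
      have hπ'Pc : π' ∈ Pc := (hPcPlan π').mpr hplan'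
      have hF' : F π' = F π₂
          + ((G.dist a b : ℝ) + (G.dist u v : ℝ) - (G.dist a v : ℝ) - (G.dist u b : ℝ)) * ε := by
        rw [hFdef]
        exact exch_sum _ haS huS hbT hvT ε
      have hFle : F π' ≤ F π₂ := by
        rw [hF']
        nlinarith [mul_nonpos_of_nonpos_of_nonneg hcost hε0.le]
      have hFge : F π₁ ≤ F π' := hπ₁min hπ'Pc
      have hπ'Q : π' ∈ Q := ⟨hπ'Pc, le_antisymm (hFle.trans hFπ₂.le) hFge⟩
      have hD' : Df π' = Df π₂ + (w a b + w u v - w a v - w u b) * ε := by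
        rw [hDfdef]
        exact exch_sum _ haS huS hbT hvT ε
      have hDle : Df π' ≤ Df π₂ := hπ₂max hπ'Q
      nlinarith [mul_pos hD hε0]
    -- helpers
    have htri : ∀ a b c : V, (G.dist a c : ℝ) ≤ (G.dist a b : ℝ) + (G.dist b c : ℝ) := by
      intro a b c
      exact_mod_cast hconn.dist_triangle
    have hgetpos : ∀ (s : Finset V) (f : V → ℝ) (a : V), a ∈ s → (∀ b ∈ s, 0 ≤ f b) →
        f a < ∑ b ∈ s, f b → ∃ v ∈ s, v ≠ a ∧ 0 < f v := by
      intro s f a ha h0 hlt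
      have he := Finset.sum_erase_add s f ha
      have hsum : 0 < ∑ b ∈ s.erase a, f b := by linarith
      obtain ⟨v, hv, hv0⟩ :=
        exists_pos_of_sum (fun b hb => h0 b (Finset.mem_of_mem_erase hb)) hsum
      exact ⟨v, Finset.mem_of_mem_erase hv, Finset.ne_of_mem_erase hv, hv0⟩
    have hgetpos2 : ∀ (s : Finset V) (f : V → ℝ) (a b : V), a ∈ s → b ∈ s → a ≠ b →
        (∀ c ∈ s, 0 ≤ f c) → f a + f b < ∑ c ∈ s, f c →
        ∃ v ∈ s, v ≠ a ∧ v ≠ b ∧ 0 < f v := by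
      intro s f a b ha hb hab h0 hlt
      have hb' : b ∈ s.erase a := Finset.mem_erase.mpr ⟨Ne.symm hab, hb⟩
      have he1 := Finset.sum_erase_add s f ha
      have he2 := Finset.sum_erase_add (s.erase a) f hb'
      have hsum : 0 < ∑ c ∈ (s.erase a).erase b, f c := by linarith
      obtain ⟨v, hv, hv0⟩ := exists_pos_of_sum
        (fun c hc => h0 c (Finset.mem_of_mem_erase (Finset.mem_of_mem_erase hc))) hsum
      refine ⟨v, Finset.mem_of_mem_erase (Finset.mem_of_mem_erase hv),
        Finset.ne_of_mem_erase (Finset.mem_of_mem_erase hv), Finset.ne_of_mem_erase hv, hv0⟩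
    -- saturation of common neighbours
    have satTri : ∀ z ∈ Tri, π₂ z z = β := by
      intro z hz
      have hzNx := hTriNx hz
      have hzNy := hTriNy hz
      have hzx : z ≠ x := fun h => hxTri (h ▸ hz)
      have hzy : z ≠ y := fun h => hyTri (h ▸ hz)
      have hle : π₂ z z ≤ β := by
        have := entry_le_right plan₂ z z
        rwa [hν, if_neg hzy, if_pos hzNy] at this
      by_contra hne
      have hlt : π₂ z z < β := lt_of_le_of_ne hle hne
      have hrow : ∑ q ∈ T, π₂ z q = β := by rw [row₂, hμ, if_neg hzx, if_pos hzNx]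
      obtain ⟨v, hvT, hvz, hv0⟩ := hgetpos T (fun q => π₂ z q) z (hNyT hzNy)
        (fun b _ => nn₂ z b) (by rw [hrow]; exact hlt)
      have hcol : ∑ p ∈ S, π₂ p z = β := by rw [col₂, hν, if_neg hzy, if_pos hzNy]
      obtain ⟨u, huS, huz, hu0⟩ := hgetpos S (fun p => π₂ p z) z (hNxS hzNx)
        (fun b _ => nn₂ b z) (by rw [hcol]; exact hlt)
      refine step z u z v (hNxS hzNx) huS (hNyT hzNy) hvT
        (fun h => huz h.symm) (fun h => hvz h.symm) hv0 hu0 ?_ ?_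
      · have h00 : (G.dist z z : ℝ) = 0 := by simp [SimpleGraph.dist_self]
        linarith [htri u z v, h00]
      · have w1 : w z z = 2 := by simp [hwdef, hz, hzx, hzy]
        have w2 : w z v = 0 := by simp [hwdef, hzx, hzy, hvz]
        have w3 : w u z = 0 := by simp [hwdef, hzx, hzy, Ne.symm huz]
        have w4 : 0 ≤ w u v := hw0 u v
        linarith
    -- saturation at x
    have satX : π₂ x x = β := by
      have hle : π₂ x x ≤ β := by
        have := entry_le_right plan₂ x x
        rwa [hν, if_neg hxy, if_pos hxNy] at this
      by_contra hne
      have hlt : π₂ x x < β := lt_of_le_of_ne hle hne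
      have hrow : ∑ q ∈ T, π₂ x q = α := by rw [row₂, hμ, if_pos rfl]
      obtain ⟨v, hvT, hvx, hv0⟩ := hgetpos T (fun q => π₂ x q) x hxT
        (fun b _ => nn₂ x b) (by rw [hrow]; exact hlt.trans_le hβα)
      have hcol : ∑ p ∈ S, π₂ p x = β := by rw [col₂, hν, if_neg hxy, if_pos hxNy]
      obtain ⟨u, huS, hux, hu0⟩ := hgetpos S (fun p => π₂ p x) x hxS
        (fun b _ => nn₂ b x) (by rw [hcol]; exact hlt)
      refine step x u x v hxS huS hxT hvT
        (fun h => hux h.symm) (fun h => hvx h.symm) hv0 hu0 ?_ ?_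
      · have h00 : (G.dist x x : ℝ) = 0 := by simp [SimpleGraph.dist_self]
        linarith [htri u x v, h00]
      · have w1 : w x x = 2 := by simp [hwdef, hxy, hxTri]
        have w2 : w x v ≤ 1 := by
          have : w x v = if v = y then 1 else 0 := by simp [hwdef, hvx, hxy, hxTri]
          rw [this]
          split <;> norm_num
        have w3 : w u x = 0 := by simp [hwdef, hux, Ne.symm hux, hxy]
        have w4 : 0 ≤ w u v := hw0 u v
        linarith
    -- saturation at y
    have satY : π₂ y y = β := by
      have hle : π₂ y y ≤ β := by
        have := entry_le_left plan₂ y y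
        rwa [hμ, if_neg (Ne.symm hxy), if_pos hyNx] at this
      by_contra hne
      have hlt : π₂ y y < β := lt_of_le_of_ne hle hne
      have hrow : ∑ q ∈ T, π₂ y q = β := by
        rw [row₂, hμ, if_neg (Ne.symm hxy), if_pos hyNx]
      obtain ⟨v, hvT, hvy, hv0⟩ := hgetpos T (fun q => π₂ y q) y hyT
        (fun b _ => nn₂ y b) (by rw [hrow]; exact hlt)
      have hcol : ∑ p ∈ S, π₂ p y = α := by rw [col₂, hν, if_pos rfl]
      obtain ⟨u, huS, huy, hu0⟩ := hgetpos S (fun p => π₂ p y) y hyS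
        (fun b _ => nn₂ b y) (by rw [hcol]; exact hlt.trans_le hβα)
      refine step y u y v hyS huS hyT hvT
        (fun h => huy h.symm) (fun h => hvy h.symm) hv0 hu0 ?_ ?_
      · have h00 : (G.dist y y : ℝ) = 0 := by simp [SimpleGraph.dist_self]
        linarith [htri u y v, h00]
      · have w1 : w y y = 2 := by simp [hwdef, Ne.symm hxy, hyTri]
        have w2 : w y v = 0 := by simp [hwdef, Ne.symm hxy, hvy, hyTri]
        have w3 : w u y ≤ 1 := by
          have : w u y = if u = x then 1 else 0 := by
            simp [hwdef, Ne.symm hxy, huy, Ne.symm huy]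
          rw [this]
          split <;> norm_num
        have w4 : 0 ≤ w u v := hw0 u v
        linarith
    -- saturation of the edge x y
    have satXY : π₂ x y = α - β := by
      have hrow : ∑ q ∈ T, π₂ x q = α := by rw [row₂, hμ, if_pos rfl]
      have hpair : π₂ x x + π₂ x y ≤ ∑ q ∈ T, π₂ x q := by
        have hsub : ({x, y} : Finset V) ⊆ T := by
          intro c hc
          rcases Finset.mem_insert.mp hc with rfl | hc
          · exact hxT
          · rw [Finset.mem_singleton] at hc
            exact hc ▸ hyT
        have h := Finset.sum_le_sum_of_subset_of_nonneg hsub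
          (fun c _ _ => nn₂ x c) (f := fun c => π₂ x c)
        rwa [Finset.sum_pair hxy] at h
      have hle : π₂ x y ≤ α - β := by
        rw [hrow] at hpair
        simp only [satX] at hpair
        linarith
      by_contra hne
      have hlt : π₂ x y < α - β := lt_of_le_of_ne hle hne
      obtain ⟨v, hvT, hvx, hvy, hv0⟩ := hgetpos2 T (fun q => π₂ x q) x y hxT hyT hxy
        (fun c _ => nn₂ x c) (by simp only [satX]; rw [hrow]; linarith)
      have hcol : ∑ p ∈ S, π₂ p y = α := by rw [col₂, hν, if_pos rfl]
      obtain ⟨u, huS, hux, huy, hu0⟩ := hgetpos2 S (fun p => π₂ p y) x y hxS hyS hxy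
        (fun c _ => nn₂ c y) (by simp only [satY]; rw [hcol]; linarith)
      -- v is in RySet territory
      have hvNy : v ∈ Ny := by
        rcases Finset.mem_insert.mp hvT with h | h
        · exact absurd h hvy
        · exact h
      have hvTri : v ∉ Tri := by
        intro hvt
        have hcolv : ∑ p ∈ S, π₂ p v = β := by
          rw [col₂, hν, if_neg hvy, if_pos hvNy]
        have hsub : ({v, x} : Finset V) ⊆ S := by
          intro c hc
          rcases Finset.mem_insert.mp hc with rfl | hc
          · exact hNxS (hTriNx hvt)
          · rw [Finset.mem_singleton] at hc
            exact hc ▸ hxS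
        have hps := Finset.sum_le_sum_of_subset_of_nonneg hsub
          (fun c _ _ => nn₂ c v) (f := fun c => π₂ c v)
        rw [Finset.sum_pair hvx, hcolv] at hps
        simp only [satTri v hvt] at hps
        linarith
      have hvadj : ¬G.Adj x v := by
        intro h
        exact hvTri (by
          rw [hTridef, Finset.mem_inter, hNxdef, hNydef, mem_neighborFinset,
            mem_neighborFinset]
          refine ⟨h, ?_⟩
          have hv := hvNy
          rwa [hNydef, mem_neighborFinset] at hv)
      have hdxv : 2 ≤ G.dist x v := by
        have h0 : G.dist x v ≠ 0 :=
          SimpleGraph.dist_ne_zero_iff_ne_and_reachable.mpr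
            ⟨fun h => hvx h.symm, hconn.preconnected x v⟩
        have h1 : G.dist x v ≠ 1 := fun h =>
          hvadj (SimpleGraph.dist_eq_one_iff_adj.mp h)
        omega
      -- u is in RxSet territory
      have huNx : u ∈ Nx := by
        rcases Finset.mem_insert.mp huS with h | h
        · exact absurd h hux
        · exact h
      have huTri : u ∉ Tri := by
        intro hut
        have hrowu : ∑ q ∈ T, π₂ u q = β := by
          rw [row₂, hμ, if_neg hux, if_pos huNx]
        have hsub : ({u, y} : Finset V) ⊆ T := by
          intro c hc
          rcases Finset.mem_insert.mp hc with rfl | hc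
          · exact hNyT (hTriNy hut)
          · rw [Finset.mem_singleton] at hc
            exact hc ▸ hyT
        have hps := Finset.sum_le_sum_of_subset_of_nonneg hsub
          (fun c _ _ => nn₂ u c) (f := fun c => π₂ u c)
        rw [Finset.sum_pair huy, hrowu] at hps
        simp only [satTri u hut] at hps
        linarith
      have huadj : ¬G.Adj y u := by
        intro h
        exact huTri (by
          rw [hTridef, Finset.mem_inter, hNxdef, hNydef, mem_neighborFinset,
            mem_neighborFinset]
          refine ⟨?_, h⟩
          have hu := huNx
          rwa [hNxdef, mem_neighborFinset] at hu)
      have hduy : 2 ≤ G.dist u y := by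
        have h0 : G.dist u y ≠ 0 :=
          SimpleGraph.dist_ne_zero_iff_ne_and_reachable.mpr
            ⟨huy, hconn.preconnected u y⟩
        have h1 : G.dist u y ≠ 1 := fun h =>
          huadj ((SimpleGraph.dist_eq_one_iff_adj.mp h).symm)
        omega
      have hduv : G.dist u v ≤ 3 := by
        have hux1 : G.dist u x = 1 := by
          rw [SimpleGraph.dist_eq_one_iff_adj]
          have hu := huNx
          rw [hNxdef, mem_neighborFinset] at hu
          exact hu.symm
        have hyv1 : G.dist y v = 1 := by
          rw [SimpleGraph.dist_eq_one_iff_adj]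
          have hv := hvNy
          rwa [hNydef, mem_neighborFinset] at hv
        have hxv3 : G.dist x v ≤ G.dist x y + G.dist y v := hconn.dist_triangle
        have huv3 : G.dist u v ≤ G.dist u x + G.dist x v := hconn.dist_triangle
        omega
      refine step x u y v hxS huS hyT hvT
        (fun h => hux h.symm) (fun h => hvy h.symm) hv0 hu0 ?_ ?_
      · have c1 : (G.dist x y : ℝ) = 1 := by rw [hd1]; norm_num
        have c2 : (G.dist u v : ℝ) ≤ 3 := by exact_mod_cast hduv
        have c3 : (2 : ℝ) ≤ (G.dist x v : ℝ) := by exact_mod_cast hdxv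
        have c4 : (2 : ℝ) ≤ (G.dist u y : ℝ) := by exact_mod_cast hduy
        linarith
      · have w1 : w x y = 1 := by simp [hwdef, hxy, Ne.symm hxy, hxTri]
        have w2 : w x v = 0 := by simp [hwdef, hxy, Ne.symm hxy, hxTri, hvx, hvy]
        have w3 : w u y = 0 := by simp [hwdef, Ne.symm hxy, hux, huy, Ne.symm huy]
        have w4 : 0 ≤ w u v := hw0 u v
        linarith
    -- zero entry extraction helpers
    have hzero : ∀ (s : Finset V) (f : V → ℝ) (a : V), a ∈ s → (∀ b ∈ s, 0 ≤ f b) →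
        f a = ∑ b ∈ s, f b → ∀ b ∈ s, b ≠ a → f b = 0 := by
      intro s f a ha h0 heq b hb hba
      have he := Finset.sum_erase_add s f ha
      have hz : ∑ c ∈ s.erase a, f c = 0 := by linarith
      exact (Finset.sum_eq_zero_iff_of_nonneg
        (fun c hc => h0 c (Finset.mem_of_mem_erase hc))).mp hz b
        (Finset.mem_erase.mpr ⟨hba, hb⟩)
    have hzero2 : ∀ (s : Finset V) (f : V → ℝ) (a b : V), a ∈ s → b ∈ s → a ≠ b →
        (∀ c ∈ s, 0 ≤ f c) → f a + f b = ∑ c ∈ s, f c →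
        ∀ c ∈ s, c ≠ a → c ≠ b → f c = 0 := by
      intro s f a b ha hb hab h0 heq c hc hca hcb
      have hb' : b ∈ s.erase a := Finset.mem_erase.mpr ⟨Ne.symm hab, hb⟩
      have he1 := Finset.sum_erase_add s f ha
      have he2 := Finset.sum_erase_add (s.erase a) f hb'
      have hz : ∑ e ∈ (s.erase a).erase b, f e = 0 := by linarith
      exact (Finset.sum_eq_zero_iff_of_nonneg (fun e he =>
        h0 e (Finset.mem_of_mem_erase (Finset.mem_of_mem_erase he)))).mp hz c
        (Finset.mem_erase.mpr ⟨hcb, Finset.mem_erase.mpr ⟨hca, hc⟩⟩)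
    -- zero entries of π₂
    have hcolx : ∑ p ∈ S, π₂ p x = β := by rw [col₂, hν, if_neg hxy, if_pos hxNy]
    have hcoly : ∑ p ∈ S, π₂ p y = α := by rw [col₂, hν, if_pos rfl]
    have hrowx : ∑ q ∈ T, π₂ x q = α := by rw [row₂, hμ, if_pos rfl]
    have hrowy : ∑ q ∈ T, π₂ y q = β := by
      rw [row₂, hμ, if_neg (Ne.symm hxy), if_pos hyNx]
    have Zx : ∀ p ∈ S, p ≠ x → π₂ p x = 0 :=
      hzero S (fun p => π₂ p x) x hxS (fun b _ => nn₂ b x) (by rw [hcolx]; exact satX)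
    have ZTriCol : ∀ z ∈ Tri, ∀ p ∈ S, p ≠ z → π₂ p z = 0 := by
      intro z hz
      have hzNy := hTriNy hz
      have hzy : z ≠ y := fun h => hyTri (h ▸ hz)
      exact hzero S (fun p => π₂ p z) z (hNxS (hTriNx hz)) (fun b _ => nn₂ b z)
        (by rw [col₂, hν, if_neg hzy, if_pos hzNy]; exact satTri z hz)
    have ZTriRow : ∀ z ∈ Tri, ∀ q ∈ T, q ≠ z → π₂ z q = 0 := by
      intro z hz
      have hzNx := hTriNx hz
      have hzx : z ≠ x := fun h => hxTri (h ▸ hz)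
      exact hzero T (fun q => π₂ z q) z (hNyT (hTriNy hz)) (fun b _ => nn₂ z b)
        (by rw [row₂, hμ, if_neg hzx, if_pos hzNx]; exact satTri z hz)
    have Zy : ∀ p ∈ S, p ≠ x → p ≠ y → π₂ p y = 0 :=
      hzero2 S (fun p => π₂ p y) x y hxS hyS hxy (fun c _ => nn₂ c y)
        (by simp only [satXY, satY]; rw [hcoly]; ring)
    have ZxRow : ∀ q ∈ T, q ≠ x → q ≠ y → π₂ x q = 0 :=
      hzero2 T (fun q => π₂ x q) x y hxT hyT hxy (fun c _ => nn₂ x c)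
        (by simp only [satX, satXY]; rw [hrowx]; ring)
    have ZyRow : ∀ q ∈ T, q ≠ y → π₂ y q = 0 :=
      hzero T (fun q => π₂ y q) y hyT (fun b _ => nn₂ y b) (by rw [hrowy]; exact satY)
    -- memberships
    have hRxFS : RxF ⊆ S := fun z hz => hNxS (hRxFNx hz)
    have hRyFT : RyF ⊆ T := fun q hq => hNyT (hRyFNy hq)
    have hRxFfacts : ∀ z ∈ RxF, z ∈ Nx ∧ z ≠ x ∧ z ≠ y ∧ z ∉ Ny ∧ z ∉ Tri := by
      intro z hz
      obtain ⟨hzNx, hzT⟩ := Finset.mem_sdiff.mp hz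
      rw [hTdef, Finset.mem_insert] at hzT
      push_neg at hzT
      exact ⟨hzNx, fun h => hxNx (h ▸ hzNx), hzT.1, hzT.2,
        fun h => hzT.2 (hTriNy h)⟩
    have hRyFfacts : ∀ q ∈ RyF, q ∈ Ny ∧ q ≠ x ∧ q ≠ y ∧ q ∉ Nx ∧ q ∉ Tri := by
      intro q hq
      obtain ⟨hqNy, hqS⟩ := Finset.mem_sdiff.mp hq
      rw [hSdef, Finset.mem_insert] at hqS
      push_neg at hqS
      exact ⟨hqNy, hqS.1, fun h => hyNy (h ▸ hqNy), hqS.2,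
        fun h => hqS.2 (hTriNx h)⟩
    -- rows of π₂ on RxF are supported on RyF
    have hRowSupp : ∀ z ∈ RxF, ∀ q ∈ T, q ∉ RyF → π₂ z q = 0 := by
      intro z hz q hqT hqR
      obtain ⟨hzNx, hzx, hzy, hzNy, _⟩ := hRxFfacts z hz
      by_cases hqy : q = y
      · exact hqy ▸ Zy z (hRxFS hz) hzx hzy
      · have hqNy : q ∈ Ny := by
          rcases Finset.mem_insert.mp hqT with h | h
          · exact absurd h hqy
          · exact h
        by_cases hqx : q = x
        · exact hqx ▸ Zx z (hRxFS hz) hzx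
        · by_cases hqTri : q ∈ Tri
          · exact ZTriCol q hqTri z (hRxFS hz) (fun h => hzNy (h ▸ hqNy))
          · exact absurd (hNysplit q hqNy hqx hqy hqTri) hqR
    have hColSupp : ∀ q ∈ RyF, ∀ p ∈ S, p ∉ RxF → π₂ p q = 0 := by
      intro q hq p hpS hpR
      obtain ⟨hqNy, hqx, hqy, hqNx, _⟩ := hRyFfacts q hq
      by_cases hpx : p = x
      · exact hpx ▸ ZxRow q (hRyFT hq) hqx hqy
      · have hpNx : p ∈ Nx := by
          rcases Finset.mem_insert.mp hpS with h | h
          · exact absurd h hpx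
          · exact h
        by_cases hpy : p = y
        · exact hpy ▸ ZyRow q (hRyFT hq) hqy
        · by_cases hpTri : p ∈ Tri
          · exact ZTriRow p hpTri q (hRyFT hq) (fun h => hqNx (h ▸ hpNx))
          · exact absurd (hNxsplit p hpNx hpx hpy hpTri) hpR
    -- marginals of the restricted matrix
    have hMrow : ∀ z ∈ RxF, ∑ q ∈ RyF, π₂ z q = β := by
      intro z hz
      obtain ⟨hzNx, hzx, _, _, _⟩ := hRxFfacts z hz
      have hrow : ∑ q ∈ T, π₂ z q = β := by rw [row₂, hμ, if_neg hzx, if_pos hzNx]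
      rw [← hrow]
      exact Finset.sum_subset hRyFT (fun q hqT hqR => hRowSupp z hz q hqT hqR)
    have hMcol : ∀ q ∈ RyF, ∑ p ∈ RxF, π₂ p q = β := by
      intro q hq
      obtain ⟨hqNy, _, hqy, _, _⟩ := hRyFfacts q hq
      have hcol : ∑ p ∈ S, π₂ p q = β := by rw [col₂, hν, if_neg hqy, if_pos hqNy]
      rw [← hcol]
      exact Finset.sum_subset hRxFS (fun p hpS hpR => hColSupp q hq p hpS hpR)
    -- decomposition of the cost of π₂
    have hFsplit : F π₂
        = (α - β) + ∑ z ∈ RxF, ∑ q ∈ RyF, (G.dist z q : ℝ) * π₂ z q := by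
      have h1 : ∀ z ∈ RxF, ∑ q ∈ T, (G.dist z q : ℝ) * π₂ z q
          = ∑ q ∈ RyF, (G.dist z q : ℝ) * π₂ z q := by
        intro z hz
        refine (Finset.sum_subset hRyFT (fun q hqT hqR => ?_)).symm
        rw [hRowSupp z hz q hqT hqR, mul_zero]
      have h2 : ∀ p ∈ S \ RxF, ∑ q ∈ T, (G.dist p q : ℝ) * π₂ p q
          = if p = x then α - β else 0 := by
        intro p hp
        obtain ⟨hpS, hpR⟩ := Finset.mem_sdiff.mp hp
        by_cases hpx : p = x
        · subst hpx
          rw [if_pos rfl]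
          have hsub : ({p, y} : Finset V) ⊆ T := by
            intro c hc
            rcases Finset.mem_insert.mp hc with rfl | hc
            · exact hxT
            · rw [Finset.mem_singleton] at hc
              exact hc ▸ hyT
          rw [← Finset.sum_subset hsub (fun q hqT hqp => ?_)]
          · rw [Finset.sum_pair hxy]
            have e0 : (G.dist p p : ℝ) = 0 := by simp [SimpleGraph.dist_self]
            have e1 : (G.dist p y : ℝ) = 1 := by rw [hd1]; norm_num
            rw [e0, e1, satXY]
            ring
          · have hqx : q ≠ p := fun h => hqp (h ▸ Finset.mem_insert_self p {y})
            have hqy : q ≠ y := fun h => hqp (by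
              rw [h]; exact Finset.mem_insert_of_mem (Finset.mem_singleton_self y))
            rw [ZxRow q hqT hqx hqy, mul_zero]
        · rw [if_neg hpx]
          have hpNx : p ∈ Nx := by
            rcases Finset.mem_insert.mp hpS with h | h
            · exact absurd h hpx
            · exact h
          by_cases hpy : p = y
          · subst hpy
            refine Finset.sum_eq_zero fun q hqT => ?_
            by_cases hqy : q = p
            · subst hqy
              simp [SimpleGraph.dist_self]
            · rw [ZyRow q hqT hqy, mul_zero]
          · by_cases hpTri : p ∈ Tri
            · refine Finset.sum_eq_zero fun q hqT => ?_
              by_cases hqp : q = p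
              · subst hqp
                simp [SimpleGraph.dist_self]
              · rw [ZTriRow p hpTri q hqT hqp, mul_zero]
            · exact absurd (hNxsplit p hpNx hpx hpy hpTri) hpR
      rw [hFdef]
      dsimp only
      rw [← Finset.sum_sdiff hRxFS]
      rw [Finset.sum_congr rfl h2, Finset.sum_congr rfl h1]
      rw [Finset.sum_ite_eq' (S \ RxF) x (fun _ => α - β),
        if_pos (Finset.mem_sdiff.mpr ⟨hxS, hxRxF⟩)]
    -- Birkhoff--von Neumann lower bound on the restricted cost
    have hBirk : β * C ≤ ∑ z ∈ RxF, ∑ q ∈ RyF, (G.dist z q : ℝ) * π₂ z q := by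
      rcases eq_or_lt_of_le hβ0 with hβz | hβpos
      · rw [← hβz, zero_mul]
        exact Finset.sum_nonneg fun z _ => Finset.sum_nonneg fun q _ =>
          mul_nonneg (by positivity) (nn₂ z q)
      · have hRxFraw : RxF = G.neighborFinset x \ insert y (G.neighborFinset y) := by
          rw [hRxFdef, hTdef, hNxdef, hNydef]
        have hRyFraw : RyF = G.neighborFinset y \ insert x (G.neighborFinset x) := by
          rw [hRyFdef, hSdef, hNxdef, hNydef]
        have hcards : RyF.card = RxF.card := by
          rw [hRxFraw, hRyFraw]
          exact (card_RxF_eq hadj hcard).symm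
        set n := RxF.card with hndef
        set eX : {z // z ∈ RxF} ≃ Fin n := RxF.equivFin with heX
        set eY : {q // q ∈ RyF} ≃ Fin n := Finset.equivFinOfCardEq hcards with heY
        have reindexX : ∀ f : V → ℝ, ∑ z ∈ RxF, f z = ∑ i, f ((eX.symm i) : V) := by
          intro f
          rw [← Finset.sum_coe_sort RxF f]
          exact (Equiv.sum_comp eX.symm (fun z : {z // z ∈ RxF} => f z)).symm
        have reindexY : ∀ f : V → ℝ, ∑ q ∈ RyF, f q = ∑ j, f ((eY.symm j) : V) := by
          intro f
          rw [← Finset.sum_coe_sort RyF f]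
          exact (Equiv.sum_comp eY.symm (fun q : {q // q ∈ RyF} => f q)).symm
        set M : Matrix (Fin n) (Fin n) ℝ :=
          fun i j => π₂ ((eX.symm i) : V) ((eY.symm j) : V) / β with hMdef
        have hMds : M ∈ doublyStochastic ℝ (Fin n) := by
          rw [mem_doublyStochastic_iff_sum]
          refine ⟨fun i j => div_nonneg (nn₂ _ _) hβ0, fun i => ?_, fun j => ?_⟩
          · have hsum : ∑ j, π₂ ((eX.symm i) : V) ((eY.symm j) : V) = β := by
              rw [← reindexY (fun q => π₂ ((eX.symm i) : V) q)]
              exact hMrow _ (eX.symm i).2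
            simp only [hMdef]
            rw [← Finset.sum_div, hsum, div_self hβpos.ne']
          · have hsum : ∑ i, π₂ ((eX.symm i) : V) ((eY.symm j) : V) = β := by
              rw [← reindexX (fun p => π₂ p ((eY.symm j) : V))]
              exact hMcol _ (eY.symm j).2
            simp only [hMdef]
            rw [← Finset.sum_div, hsum, div_self hβpos.ne']
        obtain ⟨wt, hwt0, hwt1, hwtM⟩ := exists_eq_sum_perm_of_mem_doublyStochastic hMds
        have hPentry : ∀ (σ : Equiv.Perm (Fin n)) (i j : Fin n),
            (Equiv.Perm.permMatrix ℝ σ) i j = if j = σ i then 1 else 0 := by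
          intro σ i j
          simp [Equiv.Perm.permMatrix, PEquiv.toMatrix_apply, Equiv.toPEquiv_apply,
            eq_comm]
        have hperm : ∀ σ : Equiv.Perm (Fin n),
            C ≤ ∑ i, (G.dist ((eX.symm i) : V) ((eY.symm (σ i)) : V) : ℝ) := by
          intro σ
          set φσ : V → V := fun z =>
            if h : z ∈ RxF then ((eY.symm (σ (eX ⟨z, h⟩))) : V) else z with hφσ
          have hφσval : ∀ z : {z // z ∈ RxF}, φσ (z : V) = ((eY.symm (σ (eX z))) : V) := by
            intro z
            simp only [hφσ, dif_pos z.2, Subtype.coe_eta]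
          have hbij : Set.BijOn φσ (RxSet G x y) (RySet G x y) := by
            refine ⟨?_, ?_, ?_⟩
            · intro z hz
              have hzF : z ∈ RxF := (hRxFmem z).mpr hz
              rw [hφσval ⟨z, hzF⟩]
              exact (hRyFmem _).mp (eY.symm (σ (eX ⟨z, hzF⟩))).2
            · intro z1 h1 z2 h2 heq
              have h1F : z1 ∈ RxF := (hRxFmem z1).mpr h1
              have h2F : z2 ∈ RxF := (hRxFmem z2).mpr h2
              rw [hφσval ⟨z1, h1F⟩, hφσval ⟨z2, h2F⟩] at heq
              have := eX.injective (σ.injective (eY.symm.injective (Subtype.ext heq)))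
              exact congrArg Subtype.val this
            · intro q hq
              have hqF : q ∈ RyF := (hRyFmem q).mpr hq
              refine ⟨((eX.symm (σ.symm (eY ⟨q, hqF⟩))) : V),
                (hRxFmem _).mp (eX.symm (σ.symm (eY ⟨q, hqF⟩))).2, ?_⟩
              rw [hφσval (eX.symm (σ.symm (eY ⟨q, hqF⟩)))]
              simp
          have hcostσ : assignCostOf G (RxSet G x y) φσ
              = ∑ i, (G.dist ((eX.symm i) : V) ((eY.symm (σ i)) : V) : ℝ) := by
            rw [assignCostOf_eq_sum, ← hRxFraw,
              reindexX (fun z => (G.dist z (φσ z) : ℝ))]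
            refine Finset.sum_congr rfl fun i _ => ?_
            rw [hφσval (eX.symm i)]
            simp
          calc C ≤ assignCostOf G (RxSet G x y) φσ := by
                rw [hCdef]; exact assignCost_le hbij
            _ = _ := hcostσ
        have hMentry : ∀ i j, π₂ ((eX.symm i) : V) ((eY.symm j) : V) = β * M i j := by
          intro i j
          simp only [hMdef]
          field_simp
        calc β * C ≤ β * ∑ σ : Equiv.Perm (Fin n), wt σ *
              (∑ i, (G.dist ((eX.symm i) : V) ((eY.symm (σ i)) : V) : ℝ)) := by
              have : C = ∑ σ : Equiv.Perm (Fin n), wt σ * C := by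
                rw [← Finset.sum_mul, hwt1, one_mul]
              rw [this]
              refine mul_le_mul_of_nonneg_left (Finset.sum_le_sum fun σ _ => ?_) hβ0
              exact mul_le_mul_of_nonneg_left (hperm σ) (hwt0 σ)
          _ = ∑ z ∈ RxF, ∑ q ∈ RyF, (G.dist z q : ℝ) * π₂ z q := by
              have key : ∀ (c : Fin n → Fin n → ℝ),
                  ∑ i, ∑ j, c i j * M i j
                    = ∑ σ : Equiv.Perm (Fin n), wt σ * ∑ i, c i (σ i) := by
                intro c
                rw [← hwtM]
                calc ∑ i, ∑ j, c i j * (∑ σ : Equiv.Perm (Fin n), wt σ • σ.permMatrix ℝ) i j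
                    = ∑ i, ∑ j, ∑ σ : Equiv.Perm (Fin n),
                        c i j * (wt σ * (σ.permMatrix ℝ) i j) := by
                      refine Finset.sum_congr rfl fun i _ =>
                        Finset.sum_congr rfl fun j _ => ?_
                      rw [Matrix.sum_apply, Finset.mul_sum]
                      refine Finset.sum_congr rfl fun σ _ => ?_
                      rw [Matrix.smul_apply, smul_eq_mul]
                  _ = ∑ i, ∑ σ : Equiv.Perm (Fin n), ∑ j,
                        c i j * (wt σ * (σ.permMatrix ℝ) i j) :=
                      Finset.sum_congr rfl fun i _ => Finset.sum_comm
                  _ = ∑ σ : Equiv.Perm (Fin n), ∑ i, ∑ j,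
                        c i j * (wt σ * (σ.permMatrix ℝ) i j) := Finset.sum_comm
                  _ = ∑ σ : Equiv.Perm (Fin n), wt σ * ∑ i, c i (σ i) := by
                      refine Finset.sum_congr rfl fun σ _ => ?_
                      rw [Finset.mul_sum]
                      refine Finset.sum_congr rfl fun i _ => ?_
                      rw [Finset.sum_eq_single (σ i)]
                      · rw [hPentry, if_pos rfl]; ring
                      · intro j _ hj
                        rw [hPentry, if_neg hj, mul_zero, mul_zero]
                      · intro h; exact absurd (Finset.mem_univ _) h
              rw [← key (fun i j => (G.dist ((eX.symm i) : V) ((eY.symm j) : V) : ℝ))]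
              rw [reindexX (fun z => ∑ q ∈ RyF, (G.dist z q : ℝ) * π₂ z q)]
              have hinner : ∀ i, ∑ q ∈ RyF, (G.dist ((eX.symm i) : V) q : ℝ)
                  * π₂ ((eX.symm i) : V) q
                  = ∑ j, (G.dist ((eX.symm i) : V) ((eY.symm j) : V) : ℝ)
                    * π₂ ((eX.symm i) : V) ((eY.symm j) : V) :=
                fun i => reindexY _
              rw [Finset.sum_congr rfl fun i _ => hinner i]
              have hswap : ∀ i j, (G.dist ((eX.symm i) : V) ((eY.symm j) : V) : ℝ)
                  * π₂ ((eX.symm i) : V) ((eY.symm j) : V)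
                  = β * ((G.dist ((eX.symm i) : V) ((eY.symm j) : V) : ℝ) * M i j) := by
                intro i j
                rw [hMentry i j]
                ring
              rw [Finset.sum_congr rfl fun i _ => Finset.sum_congr rfl
                fun j _ => hswap i j]
              simp only [← Finset.mul_sum]
    -- conclusion
    intro π hπ
    have hπPc : π ∈ Pc := (hPcPlan π).mpr hπ
    have hc : cost G π = F π := by
      rw [hFdef]
      exact cost_eq G hπ hμS hνT
    have hmin : F π₁ ≤ F π := hπ₁min hπPc
    have hkey : (α - β) + β * C ≤ F π₂ := by
      rw [hFsplit]
      linarith [hBirk]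
    calc (α - β) + β * C ≤ F π₂ := hkey
      _ = F π₁ := hFπ₂
      _ ≤ F π := hmin
      _ = cost G π := hc.symm
  -- conclusion
  have hmemset : ((α - β) + β * C)
      ∈ {c : ℝ | ∃ π : V → V → ℝ, IsPlan (mu G α x) (mu G α y) π ∧ cost G π = c} :=
    ⟨π₀, hplan₀, hcost₀⟩
  rw [W1]
  apply le_antisymm
  · exact csInf_le ⟨(α - β) + β * C, fun c ⟨π, hπ, hc⟩ => hc ▸ hlow π hπ⟩ hmemset
  · exact le_csInf ⟨_, hmemset⟩ fun c ⟨π, hπ, hc⟩ => hc ▸ hlow π hπ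

end ORMain

/-- exact formula for κ_α on the last linear part. -/
theorem OllivierRicci.kappaAlpha_formula_last_linear {V : Type*} (G : SimpleGraph V)
    (hlf : G.LocallyFinite) (hconn : G.Connected) (x y : V) (hadj : G.Adj x y)
    (d : ℕ) (hdx : (G.neighborSet x).ncard = d) (hdy : (G.neighborSet y).ncard = d)
    (α : ℝ) (hα : α ∈ Set.Icc (1 / ((d : ℝ) + 1)) 1) :
    OllivierRicci.kappaAlpha G α x y =
      (1 - α) / (d : ℝ) *
        ((d : ℝ) + 1 -
          OllivierRicci.assignCost G (OllivierRicci.RxSet G x y) (OllivierRicci.RySet G x y)) := by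
  classical
  haveI : Fintype (G.neighborSet x) := hlf x
  have hd0 : 0 < d := by
    rw [← hdx, Set.ncard_pos (G.neighborSet x).toFinite]
    exact ⟨y, hadj⟩
  have hdR : (0 : ℝ) < (d : ℝ) := by exact_mod_cast hd0
  rw [OllivierRicci.kappaAlpha, ORMain.W1_eq hlf hconn hadj hdx hdy hα.1 hα.2,
    SimpleGraph.dist_eq_one_iff_adj.mpr hadj]
  have hne : (d : ℝ) ≠ 0 := hdR.ne'
  push_cast
  field_simp
  ring
end
end

section
/- Let G be a locally finite graph and x ~ y adjacent vertices of equal degree d. If |△(x,y)| > (2d − 4)/3, then κ(x,y) > 0. -/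
open scoped Classical BigOperators

noncomputable section

section Helpers
open scoped Classical BigOperators
open Filter Topology Set
noncomputable section

namespace OllivierRicci
variable {V : Type*}

lemma tsum_add_le' {ι : Type*} {f g : ι → ℝ} (hf : ∀ i, 0 ≤ f i) (hg : ∀ i, 0 ≤ g i) :
    ∑' i, (f i + g i) ≤ ∑' i, f i + ∑' i, g i := by
  by_cases h : Summable f ∧ Summable g
  · exact le_of_eq (Summable.tsum_add h.1 h.2)
  · have hns : ¬ Summable fun i => f i + g i := by
      intro hs
      exact h ⟨hs.of_nonneg_of_le hf (fun i => le_add_of_nonneg_right (hg i)),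
        hs.of_nonneg_of_le hg (fun i => le_add_of_nonneg_left (hf i))⟩
    rw [tsum_eq_zero_of_not_summable hns]
    exact add_nonneg (tsum_nonneg hf) (tsum_nonneg hg)

variable (G : SimpleGraph V)

lemma mu_support {α : ℝ} {x z : V} (hz : z ≠ x) (hz' : ¬ G.Adj x z) : mu G α x z = 0 := by
  simp [mu, hz, hz']

lemma mu_nonneg {α : ℝ} (h0 : 0 ≤ α) (h1 : α ≤ 1) (x z : V) : 0 ≤ mu G α x z := by
  unfold mu
  split_ifs with h h'
  · exact h0
  · exact div_nonneg (by linarith) (Nat.cast_nonneg _)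
  · exact le_refl _

lemma mu_adj {α : ℝ} {x z : V} (h : G.Adj x z) :
    mu G α x z = (1 - α) / ((G.neighborSet x).ncard : ℝ) := by
  have : z ≠ x := fun e => (G.irrefl (e ▸ h))
  simp [mu, this, h]

lemma mu_self {α : ℝ} (x : V) : mu G α x x = α := by simp [mu]

lemma mu_hasSum {x : V} [Fintype (G.neighborSet x)] {α : ℝ}
    (hd : (G.neighborSet x).ncard ≠ 0) : HasSum (mu G α x) 1 := by
  have hsupp : ∀ z ∉ insert x (G.neighborFinset x), mu G α x z = 0 := by
    intro z hz
    simp only [Finset.mem_insert, SimpleGraph.mem_neighborFinset] at hz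
    push_neg at hz
    exact mu_support G hz.1 hz.2
  have h := hasSum_sum_of_ne_finset_zero (L := SummationFilter.unconditional V) (s := insert x (G.neighborFinset x)) hsupp
  have hx : x ∉ G.neighborFinset x := by simp
  have hcard : ((G.neighborFinset x).card : ℝ) = ((G.neighborSet x).ncard : ℝ) := by
    rw [Set.ncard_eq_toFinset_card']; rfl
  have hsum : ∑ z ∈ insert x (G.neighborFinset x), mu G α x z = 1 := by
    rw [Finset.sum_insert hx, mu_self]
    have : ∀ z ∈ G.neighborFinset x, mu G α x z
        = (1 - α) / ((G.neighborSet x).ncard : ℝ) := by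
      intro z hz
      exact mu_adj G ((SimpleGraph.mem_neighborFinset _ _ _).mp hz)
    rw [Finset.sum_congr rfl this, Finset.sum_const, nsmul_eq_mul, hcard]
    field_simp
    ring
  rwa [hsum] at h

/-- rows of a plan vanish where the first marginal vanishes -/
lemma plan_row_zero {μ₁ μ₂ : V → ℝ} {π : V → V → ℝ} (hπ : IsPlan μ₁ μ₂ π)
    {a : V} (ha : μ₁ a = 0) (b : V) : π a b = 0 := by
  have h := hπ.2.1 a
  rw [ha] at h
  exact congrFun ((hasSum_zero_iff_of_nonneg (fun b => hπ.1 a b)).mp h) b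

lemma plan_col_zero {μ₁ μ₂ : V → ℝ} {π : V → V → ℝ} (hπ : IsPlan μ₁ μ₂ π)
    {b : V} (hb : μ₂ b = 0) (a : V) : π a b = 0 := by
  have h := hπ.2.2 b
  rw [hb] at h
  exact congrFun ((hasSum_zero_iff_of_nonneg (fun a => hπ.1 a b)).mp h) a

lemma cost_nonneg {π : V → V → ℝ} (hπ : ∀ a b, 0 ≤ π a b) : 0 ≤ cost G π :=
  tsum_nonneg fun p => mul_nonneg (Nat.cast_nonneg _) (hπ p.1 p.2)

/-- The fundamental lower bound on the cost of any plan between `μ_x^α` and `μ_y^α`. -/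
lemma cost_lower_bound (hconn : G.Connected) {x y : V} (hadj : G.Adj x y)
    [Fintype (G.neighborSet x)] [Fintype (G.neighborSet y)]
    (hdx : (G.neighborSet x).ncard ≠ 0) (hdy : (G.neighborSet y).ncard ≠ 0)
    {α : ℝ} (h0 : 0 ≤ α) (h1 : α ≤ 1)
    {π : V → V → ℝ} (hπ : IsPlan (mu G α x) (mu G α y) π) :
    2 * α - 1 ≤ cost G π := by
  set Sx : Finset V := insert x (G.neighborFinset x) with hSx
  set Sy : Finset V := insert y (G.neighborFinset y) with hSy
  have hmemSx : ∀ a, a ∉ Sx → mu G α x a = 0 := by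
    intro a ha
    simp only [hSx, Finset.mem_insert, SimpleGraph.mem_neighborFinset] at ha
    push_neg at ha
    exact mu_support G ha.1 ha.2
  have hmemSy : ∀ b, b ∉ Sy → mu G α y b = 0 := by
    intro b hb
    simp only [hSy, Finset.mem_insert, SimpleGraph.mem_neighborFinset] at hb
    push_neg at hb
    exact mu_support G hb.1 hb.2
  have hrow0 : ∀ a ∉ Sx, ∀ b, π a b = 0 := fun a ha b =>
    plan_row_zero hπ (hmemSx a ha) b
  have hcol0 : ∀ b ∉ Sy, ∀ a, π a b = 0 := fun b hb a =>
    plan_col_zero hπ (hmemSy b hb) a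
  have hcost : cost G π = ∑ p ∈ Sx ×ˢ Sy, (G.dist p.1 p.2 : ℝ) * π p.1 p.2 := by
    apply tsum_eq_sum
    intro p hp
    have hp' : p.1 ∉ Sx ∨ p.2 ∉ Sy := by
      by_contra hc
      push_neg at hc
      exact hp (Finset.mem_product.mpr hc)
    rcases hp' with h | h
    · rw [hrow0 _ h, mul_zero]
    · rw [hcol0 _ h, mul_zero]
  have hrowsum : ∀ a, ∑ b ∈ Sy, π a b = mu G α x a := by
    intro a
    exact ((hasSum_sum_of_ne_finset_zero (fun b hb => hcol0 b hb a))).unique (hπ.2.1 a)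
  have hcolsum : ∀ b, ∑ a ∈ Sx, π a b = mu G α y b := by
    intro b
    exact ((hasSum_sum_of_ne_finset_zero (fun a ha => hrow0 a ha b))).unique (hπ.2.2 b)
  have hsplit : cost G π = ∑ a ∈ Sx, ∑ b ∈ Sy, (G.dist a b : ℝ) * π a b := by
    rw [hcost, Finset.sum_product]
  -- lower bound each term by (dist a y - dist b y) * π a b
  have hterm : ∀ a ∈ Sx, ∀ b ∈ Sy,
      ((G.dist a y : ℝ) - (G.dist b y : ℝ)) * π a b ≤ (G.dist a b : ℝ) * π a b := by
    intro a _ b _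
    apply mul_le_mul_of_nonneg_right _ (hπ.1 a b)
    have htri : G.dist a y ≤ G.dist a b + G.dist b y := hconn.dist_triangle
    have : (G.dist a y : ℝ) ≤ ((G.dist a b + G.dist b y : ℕ) : ℝ) := Nat.cast_le.mpr htri
    push_cast at this
    linarith
  have hlow : ∑ a ∈ Sx, ∑ b ∈ Sy, ((G.dist a y : ℝ) - (G.dist b y : ℝ)) * π a b
      ≤ cost G π := by
    rw [hsplit]
    exact Finset.sum_le_sum fun a ha => Finset.sum_le_sum fun b hb => hterm a ha b hb
  have hexp : ∑ a ∈ Sx, ∑ b ∈ Sy, ((G.dist a y : ℝ) - (G.dist b y : ℝ)) * π a b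
      = ∑ a ∈ Sx, (G.dist a y : ℝ) * mu G α x a
        - ∑ b ∈ Sy, (G.dist b y : ℝ) * mu G α y b := by
    have e1 : ∀ a, ∑ b ∈ Sy, ((G.dist a y : ℝ) - (G.dist b y : ℝ)) * π a b
        = (G.dist a y : ℝ) * mu G α x a - ∑ b ∈ Sy, (G.dist b y : ℝ) * π a b := by
      intro a
      rw [← hrowsum a, Finset.mul_sum, ← Finset.sum_sub_distrib]
      exact Finset.sum_congr rfl fun b _ => by ring
    rw [Finset.sum_congr rfl fun a _ => e1 a, Finset.sum_sub_distrib]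
    congr 1
    rw [Finset.sum_comm]
    exact Finset.sum_congr rfl fun b _ => by
      rw [← Finset.mul_sum, hcolsum b]
  -- first sum is at least α
  have hxSx : x ∈ Sx := Finset.mem_insert_self _ _
  have hySy : y ∈ Sy := Finset.mem_insert_self _ _
  have hfirst : α ≤ ∑ a ∈ Sx, (G.dist a y : ℝ) * mu G α x a := by
    have hd1 : (G.dist x y : ℝ) = 1 := by
      rw [SimpleGraph.dist_eq_one_iff_adj.mpr hadj]; norm_num
    have := Finset.single_le_sum (f := fun a => (G.dist a y : ℝ) * mu G α x a)
      (fun a _ => mul_nonneg (Nat.cast_nonneg _) (mu_nonneg G h0 h1 x a)) hxSx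
    simpa only [hd1, one_mul, mu_self] using this
  -- second sum is at most 1 - α
  have hsyt : ∑ b ∈ Sy, mu G α y b = 1 :=
    (hasSum_sum_of_ne_finset_zero (fun b hb => hmemSy b hb)).unique (mu_hasSum G hdy)
  have hsecond : ∑ b ∈ Sy, (G.dist b y : ℝ) * mu G α y b ≤ 1 - α := by
    have hb : ∀ b ∈ Sy, (G.dist b y : ℝ) * mu G α y b
        ≤ mu G α y b - (if b = y then mu G α y b else 0) := by
      intro b hb
      by_cases hby : b = y
      · subst hby; simp [SimpleGraph.dist_self]
      · simp only [if_neg hby]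
        rcases Finset.mem_insert.mp hb with h | h
        · exact absurd h hby
        · have : G.dist b y = 1 := SimpleGraph.dist_eq_one_iff_adj.mpr
            (((SimpleGraph.mem_neighborFinset _ _ _).mp h).symm)
          rw [this]; norm_num
    calc ∑ b ∈ Sy, (G.dist b y : ℝ) * mu G α y b
        ≤ ∑ b ∈ Sy, (mu G α y b - (if b = y then mu G α y b else 0)) :=
          Finset.sum_le_sum hb
      _ = 1 - α := by
          rw [Finset.sum_sub_distrib, hsyt, Finset.sum_ite_eq' Sy y, if_pos hySy, mu_self]
  linarith


lemma mu_one (x z : V) : mu G 1 x z = if z = x then 1 else 0 := by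
  unfold mu; split_ifs <;> simp

def deltaPlan (x y : V) : V → V → ℝ := fun a b => if a = x ∧ b = y then 1 else 0

lemma deltaPlan_isPlan (x y : V) : IsPlan (mu G 1 x) (mu G 1 y) (deltaPlan x y) := by
  refine ⟨fun a b => by unfold deltaPlan; split_ifs <;> norm_num, ?_, ?_⟩
  · intro a
    by_cases ha : a = x
    · have he : (fun b => deltaPlan x y a b) = fun b => if b = y then (1:ℝ) else 0 := by
        funext b; simp [deltaPlan, ha]
      rw [he, mu_one, if_pos ha]
      exact hasSum_ite_eq y (1:ℝ)
    · have he : (fun b => deltaPlan x y a b) = fun _ => (0:ℝ) := by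
        funext b; simp [deltaPlan, ha]
      rw [he, mu_one, if_neg ha]
      exact hasSum_zero
  · intro b
    by_cases hb : b = y
    · have he : (fun a => deltaPlan x y a b) = fun a => if a = x then (1:ℝ) else 0 := by
        funext a; simp [deltaPlan, hb]
      rw [he, mu_one, if_pos hb]
      exact hasSum_ite_eq x (1:ℝ)
    · have he : (fun a => deltaPlan x y a b) = fun _ => (0:ℝ) := by
        funext a; simp [deltaPlan, hb]
      rw [he, mu_one, if_neg hb]
      exact hasSum_zero

lemma cost_deltaPlan (x y : V) : cost G (deltaPlan x y) = (G.dist x y : ℝ) := by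
  unfold cost
  rw [tsum_eq_sum (s := {((x,y) : V × V)}) ?_]
  · simp [deltaPlan]
  · intro p hp
    have : ¬(p.1 = x ∧ p.2 = y) := by
      intro ⟨h1, h2⟩
      exact hp (by simp [Prod.ext_iff, h1, h2])
    simp [deltaPlan, this]

lemma mu_combo (a t : ℝ) (x z : V) :
    mu G (t * a + (1 - t)) x z = t * mu G a x z + (1 - t) * mu G 1 x z := by
  unfold mu
  split_ifs with h h'
  · ring
  · have he : (1 - (t * a + (1 - t))) = t * (1 - a) := by ring
    rw [he, mul_div_assoc]; ring
  · ring

lemma bddBelow_costSet (μ₁ μ₂ : V → ℝ) :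
    BddBelow {c : ℝ | ∃ π : V → V → ℝ, IsPlan μ₁ μ₂ π ∧ cost G π = c} := by
  refine ⟨0, fun c hc => ?_⟩
  obtain ⟨π, hπ, rfl⟩ := hc
  exact cost_nonneg G hπ.1

lemma costSet_nonempty {x y : V} [Fintype (G.neighborSet x)] [Fintype (G.neighborSet y)]
    (hdx : (G.neighborSet x).ncard ≠ 0) (hdy : (G.neighborSet y).ncard ≠ 0)
    {α : ℝ} (h0 : 0 ≤ α) (h1 : α ≤ 1) :
    {c : ℝ | ∃ π : V → V → ℝ, IsPlan (mu G α x) (mu G α y) π ∧ cost G π = c}.Nonempty := by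
  refine ⟨_, fun a b => mu G α x a * mu G α y b, ⟨?_, ?_, ?_⟩, rfl⟩
  · exact fun a b => mul_nonneg (mu_nonneg G h0 h1 x a) (mu_nonneg G h0 h1 y b)
  · intro a
    simpa using (mu_hasSum G hdy (α := α)).mul_left (mu G α x a)
  · intro b
    simpa using (mu_hasSum G hdx (α := α)).mul_right (mu G α y b)

lemma W1_convex_step {x y : V} (hadj : G.Adj x y)
    [Fintype (G.neighborSet x)] [Fintype (G.neighborSet y)]
    (hdx : (G.neighborSet x).ncard ≠ 0) (hdy : (G.neighborSet y).ncard ≠ 0)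
    {a t : ℝ} (ha0 : 0 ≤ a) (ha1 : a ≤ 1) (ht0 : 0 ≤ t) (ht1 : t ≤ 1) :
    W1 G (mu G (t * a + (1 - t)) x) (mu G (t * a + (1 - t)) y)
      ≤ t * W1 G (mu G a x) (mu G a y) + (1 - t) := by
  apply le_of_forall_pos_le_add
  intro ε hε
  obtain ⟨c1, hc1mem, hc1lt⟩ := Real.lt_sInf_add_pos
    (costSet_nonempty G hdx hdy ha0 ha1) hε
  obtain ⟨π1, hπ1, rfl⟩ := hc1mem
  set π : V → V → ℝ := fun a' b' => t * π1 a' b' + (1 - t) * deltaPlan x y a' b' with hπdef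
  have hplan : IsPlan (mu G (t * a + (1 - t)) x) (mu G (t * a + (1 - t)) y) π := by
    have hδ := deltaPlan_isPlan G x y
    refine ⟨fun a' b' => add_nonneg (mul_nonneg ht0 (hπ1.1 a' b'))
      (mul_nonneg (by linarith) (hδ.1 a' b')), ?_, ?_⟩
    · intro a'
      rw [mu_combo]
      exact ((hπ1.2.1 a').mul_left t).add ((hδ.2.1 a').mul_left (1 - t))
    · intro b'
      rw [mu_combo]
      exact ((hπ1.2.2 b').mul_left t).add ((hδ.2.2 b').mul_left (1 - t))
  have hW : W1 G (mu G (t * a + (1 - t)) x) (mu G (t * a + (1 - t)) y) ≤ cost G π :=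
    csInf_le (bddBelow_costSet G _ _) ⟨π, hplan, rfl⟩
  have hcost : cost G π ≤ t * cost G π1 + (1 - t) * cost G (deltaPlan x y) := by
    have he : ∀ p : V × V, (G.dist p.1 p.2 : ℝ) * π p.1 p.2
        = t * ((G.dist p.1 p.2 : ℝ) * π1 p.1 p.2)
          + (1 - t) * ((G.dist p.1 p.2 : ℝ) * deltaPlan x y p.1 p.2) := by
      intro p; simp only [hπdef]; ring
    calc cost G π = ∑' p : V × V, (t * ((G.dist p.1 p.2 : ℝ) * π1 p.1 p.2)
          + (1 - t) * ((G.dist p.1 p.2 : ℝ) * deltaPlan x y p.1 p.2)) := tsum_congr he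
      _ ≤ (∑' p : V × V, t * ((G.dist p.1 p.2 : ℝ) * π1 p.1 p.2))
          + ∑' p : V × V, (1 - t) * ((G.dist p.1 p.2 : ℝ) * deltaPlan x y p.1 p.2) := by
          apply tsum_add_le'
          · exact fun p => mul_nonneg ht0 (mul_nonneg (Nat.cast_nonneg _) (hπ1.1 _ _))
          · exact fun p => mul_nonneg (by linarith)
              (mul_nonneg (Nat.cast_nonneg _) ((deltaPlan_isPlan G x y).1 _ _))
      _ = t * cost G π1 + (1 - t) * cost G (deltaPlan x y) := by
          rw [tsum_mul_left, tsum_mul_left]; rfl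
  have hdist1 : cost G (deltaPlan x y) = 1 := by
    rw [cost_deltaPlan, SimpleGraph.dist_eq_one_iff_adj.mpr hadj]; norm_num
  have hc1lt' : t * cost G π1 ≤ t * W1 G (mu G a x) (mu G a y) + t * ε := by
    have h := mul_le_mul_of_nonneg_left hc1lt.le ht0
    rw [mul_add] at h
    unfold W1
    exact h
  have htε : t * ε ≤ ε := by nlinarith
  rw [hdist1] at hcost
  linarith

/-- The explicit transport plan bound at `α = 1/2`. -/
lemma W1_half_le (hconn : G.Connected) {x y : V} (hadj : G.Adj x y)
    [Fintype (G.neighborSet x)] [Fintype (G.neighborSet y)]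
    {d : ℕ} (hdx : (G.neighborSet x).ncard = d) (hdy : (G.neighborSet y).ncard = d)
    (hd1 : 1 ≤ d) :
    W1 G (mu G (1/2) x) (mu G (1/2) y)
      ≤ (1/2 - (1/2) / (d:ℝ))
        + 3 * ((d:ℝ) - 1 - ((triangleSet G x y).ncard : ℝ)) * ((1/2) / (d:ℝ)) := by
  have hdR : (0:ℝ) < (d:ℝ) := by exact_mod_cast hd1
  obtain ⟨α, hα⟩ : ∃ α : ℝ, α = 1/2 := ⟨_, rfl⟩
  obtain ⟨c, hc⟩ : ∃ c : ℝ, c = (1/2) / (d:ℝ) := ⟨_, rfl⟩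
  have hc' : c = (1 - α) / (d:ℝ) := by rw [hc, hα]; norm_num
  have hc0 : 0 ≤ c := by rw [hc]; positivity
  have hcle : c ≤ α := by
    rw [hc, hα]
    rw [div_le_iff₀ hdR]
    have h1 : (1:ℝ) ≤ d := by exact_mod_cast hd1
    nlinarith
  -- basic structure facts
  have hxy : x ≠ y := hadj.ne
  have hyNx : y ∈ G.neighborSet x := hadj
  have hxNy : x ∈ G.neighborSet y := hadj.symm
  have hxT : x ∉ triangleSet G x y := fun h => G.irrefl h.1
  have hyT : y ∉ triangleSet G x y := fun h => G.irrefl h.2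
  have hxRx : x ∉ RxSet G x y := fun h => G.irrefl h.1
  have hyRx : y ∉ RxSet G x y := fun h => h.2 (Or.inr rfl)
  have hxRy : x ∉ RySet G x y := fun h => h.2 (Or.inr rfl)
  have hyRy : y ∉ RySet G x y := fun h => G.irrefl h.1
  have hRxNx : RxSet G x y ⊆ G.neighborSet x := fun z hz => hz.1
  have hRyNy : RySet G x y ⊆ G.neighborSet y := fun z hz => hz.1
  have hTNx : triangleSet G x y ⊆ G.neighborSet x := fun z hz => hz.1
  have hTNy : triangleSet G x y ⊆ G.neighborSet y := fun z hz => hz.2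
  have hRxRy : ∀ z, z ∈ RxSet G x y → z ∉ RySet G x y := by
    intro z hz hz'
    exact hz.2 (Or.inl ⟨hz.1, hz'.1⟩)
  have hTRy : ∀ z, z ∈ triangleSet G x y → z ∉ RySet G x y := fun z hz hz' =>
    hz'.2 (Or.inl hz)
  have hTRx : ∀ z, z ∈ triangleSet G x y → z ∉ RxSet G x y := fun z hz hz' =>
    hz'.2 (Or.inl hz)
  have hpartx : ∀ a, a ∈ G.neighborSet x ↔
      (a = y ∨ a ∈ triangleSet G x y ∨ a ∈ RxSet G x y) := by
    intro a
    constructor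
    · intro ha
      by_cases h1 : a = y
      · exact Or.inl h1
      by_cases h2 : a ∈ triangleSet G x y
      · exact Or.inr (Or.inl h2)
      · exact Or.inr (Or.inr ⟨ha, fun hmem => by
          rcases hmem with h | h
          · exact h2 h
          · exact h1 h⟩)
    · rintro (rfl | h | h)
      · exact hyNx
      · exact hTNx h
      · exact hRxNx h
  have hparty : ∀ b, b ∈ G.neighborSet y ↔
      (b = x ∨ b ∈ triangleSet G x y ∨ b ∈ RySet G x y) := by
    intro b
    constructor
    · intro hb
      by_cases h1 : b = x
      · exact Or.inl h1
      by_cases h2 : b ∈ triangleSet G x y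
      · exact Or.inr (Or.inl h2)
      · exact Or.inr (Or.inr ⟨hb, fun hmem => by
          rcases hmem with h | h
          · exact h2 h
          · exact h1 h⟩)
    · rintro (rfl | h | h)
      · exact hxNy
      · exact hTNy h
      · exact hRyNy h
  -- finiteness and cardinalities
  have hfinNx : (G.neighborSet x).Finite := Set.toFinite _
  have hfinNy : (G.neighborSet y).Finite := Set.toFinite _
  have hfinT : (triangleSet G x y).Finite := hfinNx.subset hTNx
  have hfinRx : (RxSet G x y).Finite := hfinNx.subset hRxNx
  have hfinRy : (RySet G x y).Finite := hfinNy.subset hRyNy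
  have hsubx : triangleSet G x y ∪ {y} ⊆ G.neighborSet x := by
    rintro z (hz | rfl); exacts [hTNx hz, hyNx]
  have hsuby : triangleSet G x y ∪ {x} ⊆ G.neighborSet y := by
    rintro z (hz | rfl); exacts [hTNy hz, hxNy]
  have hcardx : (RxSet G x y).ncard + ((triangleSet G x y).ncard + 1)
      = d := by
    have h1 := Set.ncard_diff_add_ncard_of_subset hsubx hfinNx
    rw [hdx] at h1
    have h2 : (triangleSet G x y ∪ {y}).ncard = (triangleSet G x y).ncard + 1 := by
      rw [Set.ncard_union_eq (by simp [Set.disjoint_singleton_right, hyT]) hfinT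
        (Set.finite_singleton y), Set.ncard_singleton]
    rw [← h2]
    exact h1 ▸ rfl
  have hcardy : (RySet G x y).ncard + ((triangleSet G x y).ncard + 1)
      = d := by
    have h1 := Set.ncard_diff_add_ncard_of_subset hsuby hfinNy
    rw [hdy] at h1
    have h2 : (triangleSet G x y ∪ {x}).ncard = (triangleSet G x y).ncard + 1 := by
      rw [Set.ncard_union_eq (by simp [Set.disjoint_singleton_right, hxT]) hfinT
        (Set.finite_singleton x), Set.ncard_singleton]
    rw [← h2]
    exact h1 ▸ rfl
  have hcardRxRy : (RxSet G x y).ncard = (RySet G x y).ncard := by omega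
  -- the bijection
  have : Nonempty V := ⟨x⟩
  obtain ⟨φ, hφ⟩ : ∃ φ : V → V, Set.BijOn φ (RxSet G x y) (RySet G x y) := by
    apply Set.Finite.exists_bijOn_of_encard_eq hfinRx
    rw [← hfinRx.cast_ncard_eq, ← hfinRy.cast_ncard_eq, hcardRxRy]
  have hφRy : ∀ a ∈ RxSet G x y, φ a ∈ RySet G x y := fun a ha => hφ.mapsTo ha
  -- the map and plan
  set m : V → ℝ := fun a => if a = x then α - c else mu G α x a with hm
  set ψ : V → V := fun a => if a = x then y else if a ∈ RxSet G x y then φ a else a with hψ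
  have hψx : ψ x = y := by simp [hψ]
  have hψRx : ∀ a ∈ RxSet G x y, ψ a = φ a := by
    intro a ha
    have hax : a ≠ x := fun h => hxRx (h ▸ ha)
    simp [hψ, hax, ha]
  have hψid : ∀ a, a ≠ x → a ∉ RxSet G x y → ψ a = a := by
    intro a h1 h2; simp [hψ, h1, h2]
  have hmx : m x = α - c := by simp [hm]
  have hmne : ∀ a, a ≠ x → m a = mu G α x a := by intro a ha; simp [hm, ha]
  have hmuadjx : ∀ z, G.Adj x z → mu G α x z = c := by
    intro z hz; rw [mu_adj G hz, hdx, hc']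
  have hmuadjy : ∀ z, G.Adj y z → mu G α y z = c := by
    intro z hz; rw [mu_adj G hz, hdy, hc']
  have hmadj : ∀ a, a ≠ x → G.Adj x a → m a = c := by
    intro a h1 h2; rw [hmne a h1]; exact hmuadjx a h2
  have hm0 : ∀ a, 0 ≤ m a := by
    intro a
    by_cases hax : a = x
    · rw [hax, hmx]; linarith
    · rw [hmne a hax]
      unfold mu
      rw [if_neg hax, hα]
      split_ifs <;> positivity
  have hmzero : ∀ a, a ≠ x → a ∉ G.neighborSet x → m a = 0 := by
    intro a h1 h2
    rw [hmne a h1]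
    exact mu_support G h1 (fun h => h2 h)
  set π : V → V → ℝ := fun a b =>
    (if a = x ∧ b = x then c else 0) + (if b = ψ a then m a else 0) with hπ
  have hπnn : ∀ a b, 0 ≤ π a b := by
    intro a b
    refine add_nonneg ?_ ?_ <;> split_ifs
    exacts [hc0, le_refl _, hm0 a, le_refl _]
  set Sx : Finset V := insert x (G.neighborFinset x) with hSx
  have hxSx : x ∈ Sx := Finset.mem_insert_self _ _
  have hySx : y ∈ Sx := by
    simp [hSx, SimpleGraph.mem_neighborFinset, hadj]
  have hmemSx : ∀ a, a ∈ G.neighborSet x → a ∈ Sx := by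
    intro a ha
    simp [hSx, SimpleGraph.mem_neighborFinset]
    right; exact ha
  have hnotSx : ∀ a, a ∉ Sx → (a ≠ x ∧ a ∉ G.neighborSet x) := by
    intro a ha
    simp only [hSx, Finset.mem_insert, SimpleGraph.mem_neighborFinset] at ha
    push_neg at ha
    exact ⟨ha.1, fun h => ha.2 h⟩
  -- row sums
  have hrows : ∀ a, HasSum (fun b => π a b) (mu G α x a) := by
    intro a
    by_cases hax : a = x
    · have he : (fun b => π a b) = fun b =>
          (if b = x then c else 0) + (if b = y then m x else 0) := by
        funext b
        simp only [hπ, hax, true_and, hψx]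
      rw [he, hax, mu_self]
      convert (hasSum_ite_eq x c).add (hasSum_ite_eq y (m x)) using 1
      rw [hmx]; ring
    · have he : (fun b => π a b) = fun b => if b = ψ a then m a else 0 := by
        funext b
        simp only [hπ, hax, false_and, if_false, zero_add]
      rw [he, ← hmne a hax]
      exact hasSum_ite_eq (ψ a) (m a)
  -- column sums
  have hcols : ∀ b, HasSum (fun a => π a b) (mu G α y b) := by
    intro b
    have hvan : ∀ a, a ∉ Sx → π a b = 0 := by
      intro a ha
      obtain ⟨h1, h2⟩ := hnotSx a ha
      simp only [hπ, h1, false_and, if_false, zero_add, hmzero a h1 h2, ite_self]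
    have hsum := hasSum_sum_of_ne_finset_zero (L := SummationFilter.unconditional V) (s := Sx) (fun a ha => hvan a ha)
    suffices hs : ∑ a ∈ Sx, π a b = mu G α y b by rwa [hs] at hsum
    have hsplit : ∑ a ∈ Sx, π a b
        = (∑ a ∈ Sx, (if a = x ∧ b = x then c else 0))
          + ∑ a ∈ Sx, (if b = ψ a then m a else 0) := by
      rw [← Finset.sum_add_distrib]
    have hfirst : ∑ a ∈ Sx, (if a = x ∧ b = x then c else 0)
        = if b = x then c else 0 := by
      have he : ∀ a, (if a = x ∧ b = x then c else 0)
          = if a = x then (if b = x then c else 0) else 0 := by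
        intro a; split_ifs with h1 h2 h3 <;> tauto
      rw [Finset.sum_congr rfl fun a _ => he a, Finset.sum_ite_eq' Sx x, if_pos hxSx]
    rw [hsplit, hfirst]
    by_cases hbx : b = x
    · have hE : ∑ a ∈ Sx, (if b = ψ a then m a else 0) = 0 := by
        apply Finset.sum_eq_zero
        intro a _
        rw [if_neg]
        intro hba
        rw [hbx] at hba
        by_cases hax : a = x
        · rw [hax, hψx] at hba; exact hxy hba
        by_cases haR : a ∈ RxSet G x y
        · rw [hψRx a haR] at hba
          have hm := hφRy a haR
          rw [← hba] at hm
          exact hxRy hm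
        · rw [hψid a hax haR] at hba; exact hax hba.symm
      rw [hE, if_pos hbx, add_zero, hbx]
      exact (hmuadjy x hadj.symm).symm
    by_cases hby : b = y
    · rw [if_neg hbx, zero_add]
      have hsub : ({x, y} : Finset V) ⊆ Sx := by
        intro a ha
        rcases Finset.mem_insert.mp ha with rfl | ha
        · exact hxSx
        · rw [Finset.mem_singleton.mp ha]; exact hySx
      have hzero : ∀ a ∈ Sx, a ∉ ({x, y} : Finset V) →
          (if b = ψ a then m a else 0) = 0 := by
        intro a _ hab
        simp only [Finset.mem_insert, Finset.mem_singleton] at hab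
        push_neg at hab
        rw [if_neg]
        intro hba
        rw [hby] at hba
        by_cases haR : a ∈ RxSet G x y
        · rw [hψRx a haR] at hba
          have hm := hφRy a haR
          rw [← hba] at hm
          exact hyRy hm
        · rw [hψid a hab.1 haR] at hba; exact hab.2 hba.symm
      rw [← Finset.sum_subset hsub hzero, Finset.sum_pair hxy]
      have ht1 : (if b = ψ x then m x else 0) = m x := by rw [hψx, if_pos hby]
      have ht2 : (if b = ψ y then m y else 0) = m y := by
        rw [hψid y hxy.symm hyRx, if_pos hby]
      rw [ht1, ht2, hmx, hmadj y hxy.symm hadj, hby, mu_self]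
      ring
    by_cases hbT : b ∈ triangleSet G x y
    · rw [if_neg hbx, zero_add]
      have hbSx : b ∈ Sx := hmemSx b (hTNx hbT)
      have hbb : ψ b = b := hψid b hbx (hTRx b hbT)
      have hE : ∑ a ∈ Sx, (if b = ψ a then m a else 0)
          = (if b = ψ b then m b else 0) := by
        apply Finset.sum_eq_single_of_mem b hbSx
        intro a _ hab
        rw [if_neg]
        intro hba
        by_cases hax : a = x
        · rw [hax, hψx] at hba; exact hby hba
        by_cases haR : a ∈ RxSet G x y
        · rw [hψRx a haR] at hba
          exact hTRy b hbT (by rw [hba]; exact hφRy a haR)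
        · rw [hψid a hax haR] at hba; exact hab hba.symm
      rw [hE, hbb, if_pos rfl, hmadj b hbx hbT.1, hmuadjy b hbT.2]
    by_cases hbRy : b ∈ RySet G x y
    · rw [if_neg hbx, zero_add]
      obtain ⟨a₀, ha₀R, ha₀⟩ := hφ.surjOn hbRy
      have ha₀Sx : a₀ ∈ Sx := hmemSx a₀ (hRxNx ha₀R)
      have ha₀x : a₀ ≠ x := fun h => hxRx (h ▸ ha₀R)
      have hE : ∑ a ∈ Sx, (if b = ψ a then m a else 0)
          = (if b = ψ a₀ then m a₀ else 0) := by
        apply Finset.sum_eq_single_of_mem a₀ ha₀Sx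
        intro a haSx hab
        rw [if_neg]
        intro hba
        by_cases hax : a = x
        · rw [hax, hψx] at hba; exact hby hba
        by_cases haR : a ∈ RxSet G x y
        · rw [hψRx a haR] at hba
          exact hab (hφ.injOn haR ha₀R (hba.symm.trans ha₀.symm))
        · rw [hψid a hax haR] at hba
          have hbSx : b ∈ Sx := by rw [hba]; exact haSx
          rcases Finset.mem_insert.mp hbSx with h | h
          · exact hbx h
          · have hbNx : b ∈ G.neighborSet x := by
              rwa [SimpleGraph.mem_neighborFinset] at h
            rcases (hpartx b).mp hbNx with h' | h' | h'
            · exact hby h'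
            · exact hbT h'
            · exact haR (hba ▸ h')
      rw [hE, hψRx a₀ ha₀R, ha₀, if_pos rfl, hmadj a₀ ha₀x (hRxNx ha₀R),
        hmuadjy b (hRyNy hbRy)]
    · -- b is not in the support of μ_y
      rw [if_neg hbx, zero_add]
      have hE : ∑ a ∈ Sx, (if b = ψ a then m a else 0) = 0 := by
        apply Finset.sum_eq_zero
        intro a haSx
        rw [if_neg]
        intro hba
        by_cases hax : a = x
        · rw [hax, hψx] at hba; exact hby hba
        by_cases haR : a ∈ RxSet G x y
        · rw [hψRx a haR] at hba
          exact hbRy (by rw [hba]; exact hφRy a haR)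
        · rw [hψid a hax haR] at hba
          have hbSx : b ∈ Sx := by rw [hba]; exact haSx
          rcases Finset.mem_insert.mp hbSx with h | h
          · exact hbx h
          · have hbNx : b ∈ G.neighborSet x := by
              rwa [SimpleGraph.mem_neighborFinset] at h
            rcases (hpartx b).mp hbNx with h' | h' | h'
            · exact hby h'
            · exact hbT h'
            · exact haR (hba ▸ h')
      rw [hE]
      have hbNy : b ∉ G.neighborSet y := by
        intro h
        rcases (hparty b).mp h with h' | h' | h'
        exacts [hbx h', hbT h', hbRy h']
      exact (mu_support G hby (fun h => hbNy h)).symm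
  have hplan : IsPlan (mu G α x) (mu G α y) π := ⟨hπnn, hrows, hcols⟩
  -- cost estimate
  set B : Finset V := insert x (Sx.image ψ) with hB
  have hxB : x ∈ B := Finset.mem_insert_self x _
  have hFzero : ∀ p : V × V, p ∉ Sx ×ˢ B → (G.dist p.1 p.2 : ℝ) * π p.1 p.2 = 0 := by
    intro p hp
    have hp' : p.1 ∉ Sx ∨ p.2 ∉ B := by
      by_contra hcon
      push_neg at hcon
      exact hp (Finset.mem_product.mpr hcon)
    have hz : π p.1 p.2 = 0 := by
      rcases hp' with h | h
      · obtain ⟨h1, h2⟩ := hnotSx p.1 h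
        simp only [hπ, h1, false_and, if_false, zero_add, hmzero p.1 h1 h2, ite_self]
      · by_cases h1 : p.1 ∈ Sx
        · have hψB : ψ p.1 ∈ B := Finset.mem_insert_of_mem (Finset.mem_image_of_mem ψ h1)
          have hb1 : ¬(p.1 = x ∧ p.2 = x) := fun hcc => h (by rw [hcc.2]; exact hxB)
          have hb2 : ¬(p.2 = ψ p.1) := fun hcc => h (by rw [hcc]; exact hψB)
          simp only [hπ, if_neg hb1, if_neg hb2, add_zero]
        · obtain ⟨h1', h2'⟩ := hnotSx p.1 h1
          simp only [hπ, h1', false_and, if_false, zero_add, hmzero p.1 h1' h2', ite_self]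
    rw [hz, mul_zero]
  have hcost_eq : cost G π = ∑ p ∈ Sx ×ˢ B, (G.dist p.1 p.2 : ℝ) * π p.1 p.2 := by
    unfold cost
    exact tsum_eq_sum hFzero
  set RxF : Finset V := hfinRx.toFinset with hRxF
  have hRxF_mem : ∀ a, a ∈ RxF ↔ a ∈ RxSet G x y := fun a => hfinRx.mem_toFinset
  have hRxF_card : (RxF.card : ℝ) = ((RxSet G x y).ncard : ℝ) := by
    rw [Set.ncard_eq_toFinset_card _ hfinRx]
  have hsum_le : ∑ p ∈ Sx ×ˢ B, (G.dist p.1 p.2 : ℝ) * π p.1 p.2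
      ≤ (α - c) + 3 * ((RxSet G x y).ncard : ℝ) * c := by
    rw [Finset.sum_product]
    have hinner : ∀ a ∈ Sx, ∑ b ∈ B, (G.dist a b : ℝ) * π a b
        ≤ (if a = x then α - c else 0) + (if a ∈ RxF then 3 * c else 0) := by
      intro a _
      have hsplit2 : ∀ b, (G.dist a b : ℝ) * π a b
          = (if a = x ∧ b = x then (G.dist a b : ℝ) * c else 0)
            + (if b = ψ a then (G.dist a (ψ a) : ℝ) * m a else 0) := by
        intro b
        simp only [hπ, mul_add, mul_ite, mul_zero]
        congr 1
        by_cases h2 : b = ψ a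
        · rw [if_pos h2, if_pos h2, h2]
        · rw [if_neg h2, if_neg h2]
      have hfz : ∀ b, (if a = x ∧ b = x then (G.dist a b : ℝ) * c else 0) = 0 := by
        intro b
        split_ifs with hcc
        · rw [hcc.1, hcc.2, SimpleGraph.dist_self]; norm_num
        · rfl
      have hsum2 : ∑ b ∈ B, (G.dist a b : ℝ) * π a b
          = if ψ a ∈ B then (G.dist a (ψ a) : ℝ) * m a else 0 := by
        rw [Finset.sum_congr rfl fun b _ => hsplit2 b, Finset.sum_add_distrib,
          Finset.sum_congr rfl fun b _ => hfz b, Finset.sum_const, smul_zero, zero_add,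
          Finset.sum_ite_eq' B (ψ a) (fun _ => (G.dist a (ψ a) : ℝ) * m a)]
      rw [hsum2]
      by_cases hax : a = x
      · rw [if_pos hax]
        have hsnd : (0:ℝ) ≤ if a ∈ RxF then 3 * c else 0 := by
          split_ifs
          · linarith
          · exact le_refl _
        have hK : (G.dist a (ψ a) : ℝ) * m a = α - c := by
          rw [hax, hψx, hmx, SimpleGraph.dist_eq_one_iff_adj.mpr hadj]
          norm_num
        split_ifs <;> first | (rw [hK]; linarith) | linarith
      · by_cases haR : a ∈ RxSet G x y
        · rw [if_neg hax, if_pos ((hRxF_mem a).mpr haR), zero_add]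
          have hN1 : G.dist a x = 1 := SimpleGraph.dist_eq_one_iff_adj.mpr
            ((hRxNx haR :  G.Adj x a).symm)
          have hN2 : G.dist x y = 1 := SimpleGraph.dist_eq_one_iff_adj.mpr hadj
          have hN3 : G.dist y (φ a) = 1 := SimpleGraph.dist_eq_one_iff_adj.mpr
            (hRyNy (hφRy a haR) : G.Adj y (φ a))
          have hd3 : G.dist a (φ a) ≤ 3 := by
            calc G.dist a (φ a) ≤ G.dist a x + G.dist x (φ a) := hconn.dist_triangle
              _ ≤ G.dist a x + (G.dist x y + G.dist y (φ a)) := by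
                  exact Nat.add_le_add_left hconn.dist_triangle _
              _ = 3 := by rw [hN1, hN2, hN3]
          have hd3' : (G.dist a (ψ a) : ℝ) ≤ 3 := by
            rw [hψRx a haR]
            exact_mod_cast hd3
          have hma : m a = c := hmadj a hax (hRxNx haR)
          split_ifs with hmem
          · rw [hma]
            calc (G.dist a (ψ a) : ℝ) * c ≤ 3 * c :=
                mul_le_mul_of_nonneg_right hd3' hc0
              _ = 3 * c := rfl
          · linarith
        · rw [if_neg hax, if_neg (fun hmm => haR ((hRxF_mem a).mp hmm)), add_zero]
          have hK : (G.dist a (ψ a) : ℝ) * m a = 0 := by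
            rw [hψid a hax haR, SimpleGraph.dist_self]
            norm_num
          split_ifs
          · rw [hK]
          · exact le_refl _
    have hRxF_sub : RxF ⊆ Sx := fun a ha => hmemSx a (hRxNx ((hRxF_mem a).mp ha))
    calc ∑ a ∈ Sx, ∑ b ∈ B, (G.dist a b : ℝ) * π a b
        ≤ ∑ a ∈ Sx, ((if a = x then α - c else 0) + (if a ∈ RxF then 3 * c else 0)) :=
          Finset.sum_le_sum hinner
      _ = (α - c) + 3 * ((RxSet G x y).ncard : ℝ) * c := by
          rw [Finset.sum_add_distrib, Finset.sum_ite_eq' Sx x (fun _ => α - c), if_pos hxSx,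
            Finset.sum_ite_mem, Finset.inter_eq_right.mpr hRxF_sub, Finset.sum_const,
            nsmul_eq_mul, hRxF_card]
          ring
  have hfinal : W1 G (mu G α x) (mu G α y)
      ≤ (α - c) + 3 * ((RxSet G x y).ncard : ℝ) * c := by
    refine le_trans (csInf_le (bddBelow_costSet G _ _) ⟨π, hplan, rfl⟩) ?_
    rw [hcost_eq]
    exact hsum_le
  have hrcast : ((RxSet G x y).ncard : ℝ)
      = (d:ℝ) - 1 - ((triangleSet G x y).ncard : ℝ) := by
    have hcx : ((RxSet G x y).ncard : ℝ) + (((triangleSet G x y).ncard : ℝ) + 1) = (d:ℝ) := by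
      exact_mod_cast hcardx
    linarith
  rw [hrcast, hα, hc] at hfinal
  exact hfinal

end OllivierRicci
end
end Helpers

/-- many triangles force positive Lin-Lu-Yau curvature. -/
theorem OllivierRicci.kappa_pos_of_many_triangles {V : Type*} (G : SimpleGraph V)
    (hlf : G.LocallyFinite) (hconn : G.Connected) (x y : V) (hadj : G.Adj x y)
    (d : ℕ) (hdx : (G.neighborSet x).ncard = d) (hdy : (G.neighborSet y).ncard = d)
    (htri : ((OllivierRicci.triangleSet G x y).ncard : ℝ) > (2 * (d : ℝ) - 4) / 3) :
    0 < OllivierRicci.kappa G x y := by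
  classical
  haveI : Fintype (G.neighborSet x) := hlf x
  haveI : Fintype (G.neighborSet y) := hlf y
  open OllivierRicci Set Filter Topology in
  -- basic degree facts
  have hfinNx : (G.neighborSet x).Finite := Set.toFinite _
  have hd1 : 1 ≤ d := by
    rw [← hdx]
    exact (Set.ncard_pos hfinNx).mpr ⟨y, hadj⟩
  have hdR : (0:ℝ) < (d:ℝ) := by exact_mod_cast hd1
  have hdx0 : (G.neighborSet x).ncard ≠ 0 := by omega
  have hdy0 : (G.neighborSet y).ncard ≠ 0 := by omega
  have hdist : (G.dist x y : ℝ) = 1 := by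
    rw [SimpleGraph.dist_eq_one_iff_adj.mpr hadj]; norm_num
  set W : ℝ → ℝ := fun α => W1 G (mu G α x) (mu G α y) with hW
  have hkA : ∀ α : ℝ, kappaAlpha G α x y = 1 - W α := by
    intro α
    unfold kappaAlpha
    rw [hdist, div_one]
  set g : ℝ → ℝ := fun α => kappaAlpha G α x y / (1 - α) with hg
  -- lower bound on W1
  have hWlow : ∀ α ∈ Set.Icc (0:ℝ) 1, 2 * α - 1 ≤ W α := by
    intro α hα
    apply le_csInf (costSet_nonempty G hdx0 hdy0 hα.1 hα.2)
    rintro c ⟨π, hπ, rfl⟩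
    exact cost_lower_bound G hconn hadj hdx0 hdy0 hα.1 hα.2 hπ
  -- monotonicity of g on [0,1)
  have hmono : MonotoneOn g (Set.Ico (0:ℝ) 1) := by
    intro a ha b hb hab
    rcases eq_or_lt_of_le hab with rfl | hlt
    · exact le_refl _
    have h1a : (0:ℝ) < 1 - a := by linarith [hb.2]
    have h1b : (0:ℝ) < 1 - b := by linarith [hb.2]
    set t : ℝ := (1 - b) / (1 - a) with hts
    have ht0 : 0 < t := div_pos h1b h1a
    have ht1 : t ≤ 1 := by
      rw [hts, div_le_one h1a]
      linarith
    have hbt : t * a + (1 - t) = b := by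
      rw [hts]
      field_simp
      ring
    have hconv := W1_convex_step G hadj hdx0 hdy0 ha.1 ha.2.le ht0.le ht1
    rw [hbt] at hconv
    have hta : t * (1 - a) = 1 - b := by
      rw [hts]
      field_simp
    simp only [hg, hkA]
    rw [div_le_div_iff₀ h1a h1b]
    have key : t * (1 - W a) ≤ 1 - W b := by
      have : W b ≤ t * W a + (1 - t) := hconv
      nlinarith
    calc (1 - W a) * (1 - b) = (t * (1 - W a)) * (1 - a) := by rw [← hta]; ring
      _ ≤ (1 - W b) * (1 - a) := mul_le_mul_of_nonneg_right key h1a.le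
  -- boundedness of g on [0,1)
  have hbdd : ∀ α ∈ Set.Ico (0:ℝ) 1, g α ≤ 2 := by
    intro α hα
    have h1α : (0:ℝ) < 1 - α := by linarith [hα.2]
    have hlow := hWlow α ⟨hα.1, hα.2.le⟩
    simp only [hg, hkA]
    rw [div_le_iff₀ h1α]
    linarith
  -- the clamped function
  set g' : ℝ → ℝ := fun α => g (max α 0) with hg'
  have hmemI : ∀ α : ℝ, α < 1 → max α 0 ∈ Set.Ico (0:ℝ) 1 :=
    fun α hα => ⟨le_max_right _ _, max_lt hα one_pos⟩
  have hg'mono : MonotoneOn g' (Set.Iio (1:ℝ)) := by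
    intro a ha b hb hab
    exact hmono (hmemI a ha) (hmemI b hb) (max_le_max hab (le_refl 0))
  have hg'bdd : BddAbove (g' '' Set.Iio (1:ℝ)) := by
    refine ⟨2, ?_⟩
    rintro v ⟨a, ha, rfl⟩
    exact hbdd _ (hmemI a ha)
  have htends : Filter.Tendsto g' (nhdsWithin (1:ℝ) (Set.Iio 1))
      (nhds (sSup (g' '' Set.Iio (1:ℝ)))) :=
    MonotoneOn.tendsto_nhdsLT hg'mono hg'bdd
  have heq : g' =ᶠ[nhdsWithin (1:ℝ) (Set.Iio 1)] g := by
    filter_upwards [Ioo_mem_nhdsLT_of_mem (Set.mem_Ioc.mpr ⟨one_pos, le_refl (1:ℝ)⟩)]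
      with α hα
    simp only [hg', max_eq_left hα.1.le]
  have htends' : Filter.Tendsto g (nhdsWithin (1:ℝ) (Set.Iio 1))
      (nhds (sSup (g' '' Set.Iio (1:ℝ)))) := htends.congr' heq
  have hkappa : kappa G x y = sSup (g' '' Set.Iio (1:ℝ)) := by
    unfold kappa
    exact htends'.limUnder_eq
  -- positivity of g at 1/2
  have hhalfmem : (1/2 : ℝ) ∈ Set.Iio (1:ℝ) := by norm_num
  have hWhalf := W1_half_le G hconn hadj hdx hdy hd1
  have hgpos : 0 < g (1/2) := by
    set q : ℝ := (1/2) / (d:ℝ) with hq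
    have hq0 : 0 < q := by rw [hq]; positivity
    have hqd : q * (d:ℝ) = 1/2 := by
      rw [hq]
      exact div_mul_cancel₀ _ (ne_of_gt hdR)
    set tt : ℝ := ((triangleSet G x y).ncard : ℝ) with htt
    have h3t : 0 < 3 * tt + 4 - 2 * (d:ℝ) := by
      rw [gt_iff_lt, div_lt_iff₀ (by norm_num : (0:ℝ) < 3)] at htri
      rw [htt]
      linarith
    have hWb : W (1/2) ≤ 1/2 - q + 3 * ((d:ℝ) - 1 - tt) * q := hWhalf
    have hnum : 0 < 1 - W (1/2) := by
      have he2 : 1 - (1/2 - q + 3 * ((d:ℝ) - 1 - tt) * q)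
          = q * ((d:ℝ)) + q * (3 * tt + 4 - 3 * (d:ℝ)) - q * (d:ℝ) + 1 - 1/2 := by ring
      have he3 : q * (3 * tt + 4 - 2 * (d:ℝ)) > 0 := mul_pos hq0 h3t
      nlinarith [hqd]
    simp only [hg, hkA]
    apply div_pos hnum
    norm_num
  have hle : g (1/2) ≤ sSup (g' '' Set.Iio (1:ℝ)) := by
    have : g' (1/2) = g (1/2) := by
      simp only [hg']
      norm_num
    rw [← this]
    exact le_csSup hg'bdd (Set.mem_image_of_mem _ hhalfmem)
  rw [hkappa]
  exact lt_of_lt_of_le hgpos hle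
end
end

section
/- Let G be a locally finite graph and x ~ y adjacent vertices of equal degree d. Then there exists an optimal assignment φ between S₁(x) and S₁(y) (a bijection minimizing ∑_{z∈S₁(x)} d(z,φ(z))) that fixes every common neighbor of x and y; moreover, if |△(x,y)| < d − 1, there exists such an optimal assignment additionally satisfying φ(y) ≠ x. -/
open scoped Classical BigOperators

noncomputable section

section AuxLemmas

open OllivierRicci

variable {V : Type*} (G : SimpleGraph V)

private lemma assignCostOf_eq_sum {A : Set V} (hA : A.Finite) (φ : V → V) :
    OllivierRicci.assignCostOf G A φ = ∑ z ∈ hA.toFinset, (G.dist z (φ z) : ℝ) :=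
  finsum_mem_eq_finite_toFinset_sum _ hA

private lemma costSet_bddBelow {A B : Set V} (hA : A.Finite) :
    BddBelow {c : ℝ | ∃ φ : V → V, Set.BijOn φ A B ∧ OllivierRicci.assignCostOf G A φ = c} := by
  refine ⟨0, ?_⟩
  rintro c ⟨φ, -, rfl⟩
  rw [assignCostOf_eq_sum G hA]
  positivity

private lemma sum_swap_two {s : Finset V} {a b : V} (ha : a ∈ s) (hb : b ∈ s) (hab : a ≠ b)
    (F F' : V → ℝ) (h : ∀ z ∈ s, z ≠ a → z ≠ b → F' z = F z) :
    ∑ z ∈ s, F' z = ∑ z ∈ s, F z - F a - F b + F' a + F' b := by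
  classical
  have hb' : b ∈ s.erase a := Finset.mem_erase.2 ⟨hab.symm, hb⟩
  have e0 : ∑ z ∈ (s.erase a).erase b, F' z = ∑ z ∈ (s.erase a).erase b, F z := by
    refine Finset.sum_congr rfl fun z hz => ?_
    have hzb := (Finset.mem_erase.1 hz).1
    have hza := (Finset.mem_erase.1 (Finset.mem_erase.1 hz).2).1
    exact h z (Finset.mem_of_mem_erase (Finset.mem_of_mem_erase hz)) hza hzb
  have e1 := Finset.sum_erase_add (s.erase a) F' hb'
  have e2 := Finset.sum_erase_add s F' ha
  have e3 := Finset.sum_erase_add (s.erase a) F hb'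
  have e4 := Finset.sum_erase_add s F ha
  linarith

private lemma bijOn_comp_swap [DecidableEq V] {A B : Set V} {φ : V → V}
    (hφ : Set.BijOn φ A B) {a b : V} (ha : a ∈ A) (hb : b ∈ A) :
    Set.BijOn (φ ∘ Equiv.swap a b) A B := by
  refine hφ.comp ⟨?_, (Equiv.injective _).injOn, ?_⟩
  · intro z hz
    rcases eq_or_ne z a with rfl | hza
    · simpa using hb
    rcases eq_or_ne z b with rfl | hzb
    · simpa using ha
    · simpa [Equiv.swap_apply_of_ne_of_ne hza hzb] using hz
  · intro z hz
    rcases eq_or_ne z a with h | hza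
    · exact ⟨b, hb, by rw [h]; exact Equiv.swap_apply_right a b⟩
    rcases eq_or_ne z b with h | hzb
    · exact ⟨a, ha, by rw [h]; exact Equiv.swap_apply_left a b⟩
    · exact ⟨z, hz, Equiv.swap_apply_of_ne_of_ne hza hzb⟩

private lemma opt_swap [DecidableEq V] {A B : Set V} (hA : A.Finite) {φ : V → V}
    (hopt : OllivierRicci.IsOptAssign G A B φ) {a b : V} (ha : a ∈ A) (hb : b ∈ A)
    (hab : a ≠ b)
    (hle : (G.dist a (φ b) : ℝ) + (G.dist b (φ a) : ℝ) ≤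
      (G.dist a (φ a) : ℝ) + (G.dist b (φ b) : ℝ)) :
    OllivierRicci.IsOptAssign G A B (φ ∘ Equiv.swap a b) := by
  obtain ⟨hbij, hcost⟩ := hopt
  have hbij' := bijOn_comp_swap hbij ha hb
  have hkey : OllivierRicci.assignCostOf G A (φ ∘ Equiv.swap a b) ≤
      OllivierRicci.assignCostOf G A φ := by
    rw [assignCostOf_eq_sum G hA, assignCostOf_eq_sum G hA]
    have hmem_a : a ∈ hA.toFinset := hA.mem_toFinset.2 ha
    have hmem_b : b ∈ hA.toFinset := hA.mem_toFinset.2 hb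
    rw [sum_swap_two hmem_a hmem_b hab (fun z => (G.dist z (φ z) : ℝ))
      (fun z => (G.dist z ((φ ∘ Equiv.swap a b) z) : ℝ))
      (fun z _ hza hzb => by simp [Equiv.swap_apply_of_ne_of_ne hza hzb])]
    simp only [Function.comp_apply, Equiv.swap_apply_left, Equiv.swap_apply_right]
    linarith
  have hge : OllivierRicci.assignCost G A B ≤
      OllivierRicci.assignCostOf G A (φ ∘ Equiv.swap a b) :=
    csInf_le (costSet_bddBelow G hA) ⟨_, hbij', rfl⟩
  exact ⟨hbij', le_antisymm (hkey.trans_eq hcost) hge⟩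

end AuxLemmas

/-- there is an optimal assignment between `S₁(x)` and `S₁(y)` fixing all
common neighbors; and if `|△(x,y)| < d - 1` one with additionally `φ(y) ≠ x`. -/
theorem OllivierRicci.exists_optimal_assignment_fixing_triangles {V : Type*}
    (G : SimpleGraph V) (hlf : G.LocallyFinite) (hconn : G.Connected) (x y : V)
    (hadj : G.Adj x y) (d : ℕ)
    (hdx : (G.neighborSet x).ncard = d) (hdy : (G.neighborSet y).ncard = d) :
    (∃ φ : V → V, OllivierRicci.IsOptAssign G (G.neighborSet x) (G.neighborSet y) φ ∧
        ∀ z ∈ OllivierRicci.triangleSet G x y, φ z = z) ∧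
      ((OllivierRicci.triangleSet G x y).ncard < d - 1 →
        ∃ φ : V → V, OllivierRicci.IsOptAssign G (G.neighborSet x) (G.neighborSet y) φ ∧
          (∀ z ∈ OllivierRicci.triangleSet G x y, φ z = z) ∧ φ y ≠ x) := by
    classical
  have hA : (G.neighborSet x).Finite := by
    have := hlf x; exact (G.neighborSet x).toFinite
  have hB : (G.neighborSet y).Finite := by
    have := hlf y; exact (G.neighborSet y).toFinite
  have hTx : OllivierRicci.triangleSet G x y ⊆ G.neighborSet x := Set.inter_subset_left
  have hTy : OllivierRicci.triangleSet G x y ⊆ G.neighborSet y := Set.inter_subset_right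
  have hTfin : (OllivierRicci.triangleSet G x y).Finite := hA.subset hTx
  have : Nonempty V := ⟨x⟩
  have hcard : (G.neighborSet x).encard = (G.neighborSet y).encard := by
    rw [hA.encard_eq_coe, hB.encard_eq_coe, ← Set.ncard_def, ← Set.ncard_def, hdx, hdy]
  obtain ⟨φ₀, hφ₀⟩ := Set.Finite.exists_bijOn_of_encard_eq hA hcard
  set S : Set ℝ := {c : ℝ | ∃ φ : V → V,
    Set.BijOn φ (G.neighborSet x) (G.neighborSet y) ∧
      OllivierRicci.assignCostOf G (G.neighborSet x) φ = c} with hSdef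
  have hSne : S.Nonempty := ⟨_, φ₀, hφ₀, rfl⟩
  have hSfin : S.Finite := by
    apply Set.Finite.subset (Set.finite_range
      (fun f : (↥hA.toFinset → ↥hB.toFinset) =>
        ∑ z : ↥hA.toFinset, (G.dist ↑z ↑(f z) : ℝ)))
    rintro c ⟨φ, hbij, rfl⟩
    refine ⟨fun z => ⟨φ ↑z, hB.mem_toFinset.2 (hbij.1 (hA.mem_toFinset.1 z.2))⟩, ?_⟩
    rw [assignCostOf_eq_sum G hA]
    exact Finset.sum_coe_sort hA.toFinset fun z => (G.dist z (φ z) : ℝ)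
  have hmem : sInf S ∈ S := hSne.csInf_mem hSfin
  obtain ⟨φ₁, hbij₁, hcost₁⟩ := hmem
  have hACeq : OllivierRicci.assignCost G (G.neighborSet x) (G.neighborSet y) = sInf S := rfl
  have hopt₁ : OllivierRicci.IsOptAssign G (G.neighborSet x) (G.neighborSet y) φ₁ :=
    ⟨hbij₁, by rw [hACeq]; exact hcost₁⟩
  have key : ∀ n : ℕ, ∀ φ : V → V,
      OllivierRicci.IsOptAssign G (G.neighborSet x) (G.neighborSet y) φ →
      {z ∈ OllivierRicci.triangleSet G x y | φ z ≠ z}.ncard ≤ n →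
      ∃ φ', OllivierRicci.IsOptAssign G (G.neighborSet x) (G.neighborSet y) φ' ∧
        ∀ z ∈ OllivierRicci.triangleSet G x y, φ' z = z := by
    intro n
    induction n with
    | zero =>
      intro φ hopt hcard0
      refine ⟨φ, hopt, fun z hz => ?_⟩
      have hemp : {z ∈ OllivierRicci.triangleSet G x y | φ z ≠ z} = ∅ := by
        rw [← Set.ncard_eq_zero (hTfin.subset (Set.sep_subset _ _))]
        omega
      by_contra h
      exact (Set.eq_empty_iff_forall_notMem.1 hemp z) ⟨hz, h⟩
    | succ n ih =>
      intro φ hopt hcard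
      by_cases hall : ∀ z ∈ OllivierRicci.triangleSet G x y, φ z = z
      · exact ⟨φ, hopt, hall⟩
      push_neg at hall
      obtain ⟨z, hzT, hz⟩ := hall
      have hzA : z ∈ G.neighborSet x := hTx hzT
      have hzB : z ∈ G.neighborSet y := hTy hzT
      obtain ⟨w, hwA, hwz⟩ := hopt.1.2.2 hzB
      have hwzne : w ≠ z := by rintro rfl; exact hz hwz
      have hle : (G.dist z (φ w) : ℝ) + (G.dist w (φ z) : ℝ) ≤
          (G.dist z (φ z) : ℝ) + (G.dist w (φ w) : ℝ) := by
        rw [hwz]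
        have h1 : (G.dist w (φ z) : ℝ) ≤ (G.dist w z : ℝ) + (G.dist z (φ z) : ℝ) := by
          exact_mod_cast hconn.dist_triangle (v := z)
        have h2 : G.dist z z = 0 := SimpleGraph.dist_self
        rw [h2]
        push_cast
        linarith
      have hopt' := opt_swap G hA hopt hzA hwA hwzne.symm hle
      have hfixz : (φ ∘ Equiv.swap z w) z = z := by
        simp [Equiv.swap_apply_left, hwz]
      have hsub : {u ∈ OllivierRicci.triangleSet G x y | (φ ∘ Equiv.swap z w) u ≠ u} ⊆
          {u ∈ OllivierRicci.triangleSet G x y | φ u ≠ u} \ {z} := by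
        rintro u ⟨huT, hu⟩
        have huz : u ≠ z := by rintro rfl; exact hu hfixz
        refine ⟨⟨huT, ?_⟩, huz⟩
        rcases eq_or_ne u w with rfl | huw
        · rw [hwz]; exact hwzne.symm
        · intro h; apply hu
          simp [Equiv.swap_apply_of_ne_of_ne huz huw, h]
      have hzmem : z ∈ {u ∈ OllivierRicci.triangleSet G x y | φ u ≠ u} := ⟨hzT, hz⟩
      have hfin1 : ({u ∈ OllivierRicci.triangleSet G x y | φ u ≠ u}).Finite :=
        hTfin.subset (Set.sep_subset _ _)
      have hlt : {u ∈ OllivierRicci.triangleSet G x y | (φ ∘ Equiv.swap z w) u ≠ u}.ncard ≤ n := by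
        have h1 := Set.ncard_le_ncard hsub (hfin1.subset Set.diff_subset)
        have h2 := Set.ncard_diff_singleton_of_mem hzmem
        omega
      exact ih _ hopt' hlt
  obtain ⟨φ₂, hopt₂, hfix₂⟩ := key _ φ₁ hopt₁ le_rfl
  refine ⟨⟨φ₂, hopt₂, hfix₂⟩, fun hlt => ?_⟩
  by_cases hyx : φ₂ y ≠ x
  · exact ⟨φ₂, hopt₂, hfix₂, hyx⟩
  push_neg at hyx
  have hyA : y ∈ G.neighborSet x := hadj
  have hnotsub : ¬ (G.neighborSet x ⊆ OllivierRicci.triangleSet G x y ∪ {y}) := by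
    intro hsub
    have h1 := Set.ncard_le_ncard hsub (hTfin.union (Set.finite_singleton y))
    have h2 := Set.ncard_union_le (OllivierRicci.triangleSet G x y) {y}
    rw [Set.ncard_singleton] at h2
    omega
  obtain ⟨u, huA, huTy⟩ := Set.not_subset.1 hnotsub
  have huT : u ∉ OllivierRicci.triangleSet G x y := fun h => huTy (Or.inl h)
  have huy : u ≠ y := fun h => huTy (Or.inr h)
  have hyT : y ∉ OllivierRicci.triangleSet G x y := fun h => G.irrefl (hTy h)
  have hvB : φ₂ u ∈ G.neighborSet y := hopt₂.1.1 huA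
  have hvx : φ₂ u ≠ x := fun h => huy (hopt₂.1.2.1 huA hyA (h.trans hyx.symm))
  have huv : u ≠ φ₂ u := by
    intro h
    exact huT ⟨huA, by rw [h]; exact hvB⟩
  have hle : (G.dist y (φ₂ u) : ℝ) + (G.dist u (φ₂ y) : ℝ) ≤
      (G.dist y (φ₂ y) : ℝ) + (G.dist u (φ₂ u) : ℝ) := by
    rw [hyx]
    have h1 : G.dist y (φ₂ u) = 1 := SimpleGraph.dist_eq_one_iff_adj.2 hvB
    have h2 : G.dist u x = 1 := SimpleGraph.dist_eq_one_iff_adj.2 (G.adj_symm huA)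
    have h3 : G.dist y x = 1 := SimpleGraph.dist_eq_one_iff_adj.2 hadj.symm
    have h4 : 0 < G.dist u (φ₂ u) := hconn.pos_dist_of_ne huv
    have h5 : (1 : ℝ) ≤ (G.dist u (φ₂ u) : ℝ) := by exact_mod_cast h4
    rw [h1, h2, h3]
    push_cast
    linarith
  have hopt₃ := opt_swap G hA hopt₂ hyA huA (Ne.symm huy) hle
  refine ⟨φ₂ ∘ Equiv.swap y u, hopt₃, fun zz hzz => ?_, ?_⟩
  · have h1 : zz ≠ y := fun h => hyT (h ▸ hzz)
    have h2 : zz ≠ u := fun h => huT (h ▸ hzz)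
    simp [Equiv.swap_apply_of_ne_of_ne h1 h2, hfix₂ zz hzz]
  · simpa using hvx
end
end

section
/- Let G be a locally finite graph and x ~ y adjacent vertices of equal degree d with |△(x,y)| = d − 1. Then κ₀(x,y) = (d−1)/d and κ(x,y) = (d+1)/d; in particular κ₀(x,y) = κ(x,y) − 2/d. -/
open scoped Classical BigOperators

noncomputable section

namespace OllivierRicci

variable {V : Type*}

private lemma hasSum_ite_eq' {ι : Type*} (b : ι) (a : ℝ) :
    HasSum (fun w : ι => if b = w then a else 0) a := by
  have h : (fun w : ι => if b = w then a else 0) = fun w : ι => if w = b then a else 0 := by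
    funext w
    rcases eq_or_ne w b with h | h
    · subst h; simp
    · rw [if_neg h, if_neg fun hh => h hh.symm]
  rw [h]
  exact hasSum_ite_eq b a

private lemma min_add_max_sub (a b : ℝ) : min a b + max (a - b) 0 = a := by
  rcases le_total a b with h | h
  · rw [min_eq_left h, max_eq_right (by linarith)]; ring
  · rw [min_eq_right h, max_eq_left (by linarith)]; ring

lemma W1_eval {V : Type*} (G : SimpleGraph V) (hlf : G.LocallyFinite) (hconn : G.Connected)
    (x y : V) (hadj : G.Adj x y) (d : ℕ) (hdx : (G.neighborSet x).ncard = d)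
    (hdy : (G.neighborSet y).ncard = d) (htri : (triangleSet G x y).ncard = d - 1)
    (α : ℝ) (h0 : 0 ≤ α) (h1 : α ≤ 1) :
    W1 G (mu G α x) (mu G α y) = |α - (1 - α) / d| := by
  haveI := hlf x
  haveI := hlf y
  have hfx : (G.neighborSet x).Finite := Set.toFinite _
  have hfy : (G.neighborSet y).Finite := Set.toFinite _
  have hne : x ≠ y := G.ne_of_adj hadj
  have hd0 : 0 < d := by
    rw [← hdx]; exact (Set.ncard_pos hfx).mpr ⟨y, hadj⟩
  have hdR : (0 : ℝ) < d := by exact_mod_cast hd0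
  have hβ0 : (0 : ℝ) ≤ (1 - α) / d := div_nonneg (by linarith) hdR.le
  have hμxx : mu G α x x = α := by simp [mu]
  have hμyy : mu G α y y = α := by simp [mu]
  have hμxy : mu G α x y = (1 - α) / d := by simp [mu, hne.symm, hadj, hdx]
  have hμyx : mu G α y x = (1 - α) / d := by simp [mu, hne, hadj.symm, hdy]
  -- structure of neighborhoods
  have hT : triangleSet G x y = G.neighborSet x \ {y} := by
    apply Set.eq_of_subset_of_ncard_le
    · rintro z ⟨hz1, hz2⟩
      refine ⟨hz1, ?_⟩
      simp only [Set.mem_singleton_iff]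
      rintro rfl
      exact G.irrefl hz2
    · rw [Set.ncard_diff_singleton_of_mem (show y ∈ G.neighborSet x from hadj), hdx, htri]
    · exact hfx.diff
  have hT' : triangleSet G x y = G.neighborSet y \ {x} := by
    apply Set.eq_of_subset_of_ncard_le
    · rintro z ⟨hz1, hz2⟩
      refine ⟨hz2, ?_⟩
      simp only [Set.mem_singleton_iff]
      rintro rfl
      exact G.irrefl hz1
    · rw [Set.ncard_diff_singleton_of_mem (show x ∈ G.neighborSet y from hadj.symm), hdy, htri]
    · exact hfy.diff
  have heq : ∀ z, z ≠ x → z ≠ y → mu G α x z = mu G α y z := by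
    intro z hzx hzy
    by_cases hza : G.Adj x z
    · have hz1 : z ∈ G.neighborSet x \ {y} := ⟨hza, by simpa using hzy⟩
      rw [← hT, hT'] at hz1
      have hz2 : G.Adj y z := hz1.1
      simp [mu, hzx, hzy, hza, hz2, hdx, hdy]
    · have hz2 : ¬ G.Adj y z := by
        intro h
        have : z ∈ G.neighborSet y \ {x} := ⟨h, by simpa using hzx⟩
        rw [← hT', hT] at this
        exact hza this.1
      simp [mu, hzx, hzy, hza, hz2]
  have hnnx : ∀ z, 0 ≤ mu G α x z := by
    intro z; unfold mu; split_ifs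
    · exact h0
    · exact div_nonneg (by linarith) (Nat.cast_nonneg _)
    · exact le_rfl
  have hnny : ∀ z, 0 ≤ mu G α y z := by
    intro z; unfold mu; split_ifs
    · exact h0
    · exact div_nonneg (by linarith) (Nat.cast_nonneg _)
    · exact le_rfl
  have hdist1 : ∀ u v : V, u ≠ v → 1 ≤ (G.dist u v : ℝ) := by
    intro u v huv
    have := hconn.pos_dist_of_ne huv
    exact_mod_cast this
  have hdxy : G.dist x y = 1 := SimpleGraph.dist_eq_one_iff_adj.mpr hadj
  have hdyx : G.dist y x = 1 := SimpleGraph.dist_eq_one_iff_adj.mpr hadj.symm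
  set e1 : ℝ := max (α - (1 - α) / d) 0 with he1def
  set e2 : ℝ := max ((1 - α) / d - α) 0 with he2def
  have he1 : 0 ≤ e1 := le_max_right _ _
  have he2 : 0 ≤ e2 := le_max_right _ _
  set π : V → V → ℝ := fun z w =>
    (if z = w then min (mu G α x z) (mu G α y z) else 0) +
      ((if z = x ∧ w = y then e1 else 0) + (if z = y ∧ w = x then e2 else 0)) with hπdef
  have habs : e1 + e2 = |α - (1 - α) / d| := by
    rcases le_total α ((1 - α) / d) with h | h
    · rw [he1def, he2def, abs_of_nonpos (by linarith), max_eq_right (by linarith),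
        max_eq_left (by linarith)]
      ring
    · rw [he1def, he2def, abs_of_nonneg (by linarith), max_eq_left (by linarith),
        max_eq_right (by linarith)]
      ring
  have hplan : IsPlan (mu G α x) (mu G α y) π := by
    refine ⟨?_, ?_, ?_⟩
    · intro z w
      refine add_nonneg ?_ (add_nonneg ?_ ?_) <;> split_ifs
      · exact le_min (hnnx z) (hnny z)
      · exact le_rfl
      · exact he1
      · exact le_rfl
      · exact he2
      · exact le_rfl
    · intro z
      have hs1 : HasSum (fun w => if z = w then min (mu G α x z) (mu G α y z) else 0)
          (min (mu G α x z) (mu G α y z)) := hasSum_ite_eq' z _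
      have hs2 : HasSum (fun w => if z = x ∧ w = y then e1 else 0)
          (if z = x then e1 else 0) := by
        by_cases hz : z = x
        · subst hz; simpa using hasSum_ite_eq y e1
        · simpa [hz] using hasSum_zero
      have hs3 : HasSum (fun w => if z = y ∧ w = x then e2 else 0)
          (if z = y then e2 else 0) := by
        by_cases hz : z = y
        · subst hz; simpa using hasSum_ite_eq x e2
        · simpa [hz] using hasSum_zero
      have htot := hs1.add (hs2.add hs3)
      have hval : min (mu G α x z) (mu G α y z) +
          ((if z = x then e1 else 0) + (if z = y then e2 else 0)) = mu G α x z := by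
        by_cases hz : z = x
        · subst hz
          rw [if_pos rfl, if_neg hne, hμxx, hμyx, add_zero, he1def]
          exact min_add_max_sub _ _
        · by_cases hz' : z = y
          · subst hz'
            rw [if_neg hz, if_pos rfl, hμxy, hμyy, zero_add, he2def]
            exact min_add_max_sub _ _
          · rw [if_neg hz, if_neg hz', heq z hz hz', min_self]
            ring
      rw [← hval]
      exact htot
    · intro w
      have hfun : (fun z => if z = w then min (mu G α x z) (mu G α y z) else 0) =
          fun z => if z = w then min (mu G α x w) (mu G α y w) else 0 := by
        funext z
        rcases eq_or_ne z w with h | h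
        · subst h; rfl
        · rw [if_neg h, if_neg h]
      have hs1 : HasSum (fun z => if z = w then min (mu G α x z) (mu G α y z) else 0)
          (min (mu G α x w) (mu G α y w)) := by
        rw [hfun]; exact hasSum_ite_eq w _
      have hs2 : HasSum (fun z : V => if z = x ∧ w = y then e1 else 0)
          (if w = y then e1 else 0) := by
        by_cases hw : w = y
        · simpa [hw] using hasSum_ite_eq x e1
        · simpa [hw] using hasSum_zero
      have hs3 : HasSum (fun z : V => if z = y ∧ w = x then e2 else 0)
          (if w = x then e2 else 0) := by
        by_cases hw : w = x
        · simpa [hw] using hasSum_ite_eq y e2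
        · simpa [hw] using hasSum_zero
      have htot := hs1.add (hs2.add hs3)
      have hval : min (mu G α x w) (mu G α y w) +
          ((if w = y then e1 else 0) + (if w = x then e2 else 0)) = mu G α y w := by
        by_cases hw : w = x
        · subst hw
          rw [if_neg hne, if_pos rfl, hμxx, hμyx, zero_add, he2def, min_comm]
          exact min_add_max_sub _ _
        · by_cases hw' : w = y
          · subst hw'
            rw [if_pos rfl, if_neg fun h => hne h.symm, hμxy, hμyy, add_zero, he1def, min_comm]
            exact min_add_max_sub _ _
          · rw [if_neg hw', if_neg hw, heq w hw hw', min_self]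
            ring
      rw [← hval]
      exact htot
  have hπeq : (fun p : V × V => (G.dist p.1 p.2 : ℝ) * π p.1 p.2) =
      fun p => (if p = (x, y) then e1 else 0) + (if p = (y, x) then e2 else 0) := by
    funext p
    obtain ⟨z, w⟩ := p
    by_cases hzw : z = w
    · subst hzw
      have h1 : ((z, z) : V × V) ≠ (x, y) := by
        rw [Ne, Prod.mk.injEq]
        rintro ⟨rfl, rfl⟩
        exact hne rfl
      have h2 : ((z, z) : V × V) ≠ (y, x) := by
        rw [Ne, Prod.mk.injEq]
        rintro ⟨rfl, rfl⟩
        exact hne rfl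
      simp [SimpleGraph.dist_self, h1, h2]
    · by_cases h1 : z = x ∧ w = y
      · obtain ⟨h1a, h1b⟩ := h1
        have hp : ((z, w) : V × V) = (x, y) := by rw [h1a, h1b]
        have hp2 : ((z, w) : V × V) ≠ (y, x) := by
          rw [h1a, h1b, Ne, Prod.mk.injEq]
          rintro ⟨rfl, -⟩
          exact hne rfl
        rw [hπdef]
        simp only [if_pos (⟨h1a, h1b⟩ : z = x ∧ w = y), if_pos hp, if_neg hp2, if_neg hzw,
          if_neg (fun h : z = y ∧ w = x => hne (h1a.symm.trans h.1))]
        rw [h1a, h1b, hdxy]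
        push_cast
        ring
      · by_cases h2 : z = y ∧ w = x
        · obtain ⟨h2a, h2b⟩ := h2
          have hp : ((z, w) : V × V) = (y, x) := by rw [h2a, h2b]
          have hp2 : ((z, w) : V × V) ≠ (x, y) := by
            rw [h2a, h2b, Ne, Prod.mk.injEq]
            rintro ⟨rfl, -⟩
            exact hne rfl
          rw [hπdef]
          simp only [if_pos (⟨h2a, h2b⟩ : z = y ∧ w = x), if_pos hp, if_neg hp2, if_neg hzw,
            if_neg (fun h : z = x ∧ w = y => hne (h.1.symm.trans h2a))]
          rw [h2a, h2b, hdyx]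
          push_cast
          ring
        · have hp1 : ((z, w) : V × V) ≠ (x, y) := by
            rw [Ne, Prod.mk.injEq]; exact h1
          have hp2 : ((z, w) : V × V) ≠ (y, x) := by
            rw [Ne, Prod.mk.injEq]; exact h2
          rw [hπdef]
          simp only [if_neg hzw, if_neg h1, if_neg h2, if_neg hp1, if_neg hp2]
          ring
  have hcost : cost G π = e1 + e2 := by
    rw [cost, hπeq]
    exact ((hasSum_ite_eq ((x, y) : V × V) e1).add (hasSum_ite_eq ((y, x) : V × V) e2)).tsum_eq
  -- lower bound
  have hlb : ∀ c ∈ {c : ℝ | ∃ π : V → V → ℝ, IsPlan (mu G α x) (mu G α y) π ∧ cost G π = c},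
      |α - (1 - α) / d| ≤ c := by
    rintro c ⟨ρ, ⟨hnn, hrow, hcol⟩, rfl⟩
    have hS0 : ({x, y} ∪ (G.neighborSet x ∪ G.neighborSet y) : Set V).Finite :=
      ((Set.finite_singleton y).insert x).union (hfx.union hfy)
    set F : Finset V := hS0.toFinset with hFdef
    have hmemF : ∀ z : V, z ∉ F → z ≠ x ∧ z ≠ y ∧ ¬ G.Adj x z ∧ ¬ G.Adj y z := by
      intro z hz
      have hz' : z ∉ ({x, y} ∪ (G.neighborSet x ∪ G.neighborSet y) : Set V) := by
        intro hm
        exact hz (hS0.mem_toFinset.mpr hm)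
      refine ⟨?_, ?_, ?_, ?_⟩
      · rintro rfl; exact hz' (Or.inl (Or.inl rfl))
      · rintro rfl; exact hz' (Or.inl (Or.inr rfl))
      · intro h; exact hz' (Or.inr (Or.inl h))
      · intro h; exact hz' (Or.inr (Or.inr h))
    have hρle1 : ∀ z w, ρ z w ≤ mu G α x z := fun z w =>
      le_hasSum (hrow z) w fun b _ => hnn z b
    have hρle2 : ∀ z w, ρ z w ≤ mu G α y w := fun z w =>
      le_hasSum (hcol w) z fun b _ => hnn b w
    have hsupp : ∀ z w : V, z ∉ F ∨ w ∉ F → ρ z w = 0 := by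
      intro z w h
      rcases h with h | h
      · obtain ⟨h1', h2', h3', -⟩ := hmemF z h
        have : mu G α x z = 0 := by simp [mu, h1', h3']
        exact le_antisymm (this ▸ hρle1 z w) (hnn z w)
      · obtain ⟨h1', h2', -, h4'⟩ := hmemF w h
        have : mu G α y w = 0 := by simp [mu, h2', h4']
        exact le_antisymm (this ▸ hρle2 z w) (hnn z w)
    have hsupp' : ∀ p : V × V, p ∉ F ×ˢ F → ρ p.1 p.2 = 0 := by
      intro p hp
      rw [Finset.mem_product, not_and_or] at hp
      exact hsupp p.1 p.2 hp
    have hcostsum : Summable (fun p : V × V => (G.dist p.1 p.2 : ℝ) * ρ p.1 p.2) :=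
      summable_of_ne_finset_zero (s := F ×ˢ F) fun p hp => by rw [hsupp' p hp, mul_zero]
    have hgs1 : HasSum (fun p : V × V => if p.1 = x then ρ p.1 p.2 else 0) α := by
      have hinj : Function.Injective (Prod.mk x : V → V × V) := Prod.mk_right_injective x
      refine (hinj.hasSum_iff ?_).mp ?_
      · rintro ⟨z, w⟩ hp
        have hz : z ≠ x := by
          rintro rfl
          exact hp ⟨w, rfl⟩
        simp [hz]
      · have := hrow x
        rw [hμxx] at this
        have hcomp : ((fun p : V × V => if p.1 = x then ρ p.1 p.2 else 0) ∘ Prod.mk x) =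
            fun w => ρ x w := by
          funext w
          simp
        rw [hcomp]
        exact this
    have hgs2 : HasSum (fun p : V × V => if p.2 = x then ρ p.1 p.2 else 0) ((1 - α) / d) := by
      have hinj : Function.Injective (fun z : V => ((z, x) : V × V)) := by
        intro a b h
        exact (Prod.ext_iff.mp h).1
      refine (hinj.hasSum_iff ?_).mp ?_
      · rintro ⟨z, w⟩ hp
        have hw : w ≠ x := by
          rintro rfl
          exact hp ⟨z, rfl⟩
        simp [hw]
      · have := hcol x
        rw [hμyx] at this
        have hcomp : ((fun p : V × V => if p.2 = x then ρ p.1 p.2 else 0) ∘ fun z : V => (z, x)) =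
            fun z => ρ z x := by
          funext z
          simp
        rw [hcomp]
        exact this
    have hpt1 : ∀ p : V × V,
        (if p.1 = x then ρ p.1 p.2 else 0) - (if p.2 = x then ρ p.1 p.2 else 0) ≤
          (G.dist p.1 p.2 : ℝ) * ρ p.1 p.2 := by
      rintro ⟨z, w⟩
      by_cases hzw : z = w
      · subst hzw
        simp [SimpleGraph.dist_self]
      · have hd1 := hdist1 z w hzw
        have hle1 : (if z = x then ρ z w else 0) ≤ ρ z w := by
          split_ifs
          · exact le_rfl
          · exact hnn z w
        have hge2 : 0 ≤ (if w = x then ρ z w else 0) := by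
          split_ifs
          · exact hnn z w
          · exact le_rfl
        calc (if z = x then ρ z w else 0) - (if w = x then ρ z w else 0) ≤ ρ z w := by
              linarith
          _ ≤ (G.dist z w : ℝ) * ρ z w := le_mul_of_one_le_left (hnn z w) hd1
    have hpt2 : ∀ p : V × V,
        (if p.2 = x then ρ p.1 p.2 else 0) - (if p.1 = x then ρ p.1 p.2 else 0) ≤
          (G.dist p.1 p.2 : ℝ) * ρ p.1 p.2 := by
      rintro ⟨z, w⟩
      by_cases hzw : z = w
      · subst hzw
        simp [SimpleGraph.dist_self]
      · have hd1 := hdist1 z w hzw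
        have hle1 : (if w = x then ρ z w else 0) ≤ ρ z w := by
          split_ifs
          · exact le_rfl
          · exact hnn z w
        have hge2 : 0 ≤ (if z = x then ρ z w else 0) := by
          split_ifs
          · exact hnn z w
          · exact le_rfl
        calc (if w = x then ρ z w else 0) - (if z = x then ρ z w else 0) ≤ ρ z w := by
              linarith
          _ ≤ (G.dist z w : ℝ) * ρ z w := le_mul_of_one_le_left (hnn z w) hd1
    have hle1 : α - (1 - α) / d ≤ cost G ρ := by
      have hsub := hgs1.sub hgs2
      calc α - (1 - α) / d = ∑' p : V × V,
            ((if p.1 = x then ρ p.1 p.2 else 0) - (if p.2 = x then ρ p.1 p.2 else 0)) :=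
          hsub.tsum_eq.symm
        _ ≤ ∑' p : V × V, (G.dist p.1 p.2 : ℝ) * ρ p.1 p.2 :=
          Summable.tsum_le_tsum hpt1 hsub.summable hcostsum
        _ = cost G ρ := rfl
    have hle2 : (1 - α) / d - α ≤ cost G ρ := by
      have hsub := hgs2.sub hgs1
      calc (1 - α) / d - α = ∑' p : V × V,
            ((if p.2 = x then ρ p.1 p.2 else 0) - (if p.1 = x then ρ p.1 p.2 else 0)) :=
          hsub.tsum_eq.symm
        _ ≤ ∑' p : V × V, (G.dist p.1 p.2 : ℝ) * ρ p.1 p.2 :=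
          Summable.tsum_le_tsum hpt2 hsub.summable hcostsum
        _ = cost G ρ := rfl
    exact abs_sub_le_iff.mpr ⟨hle1, hle2⟩
  have hmem : |α - (1 - α) / d| ∈
      {c : ℝ | ∃ π : V → V → ℝ, IsPlan (mu G α x) (mu G α y) π ∧ cost G π = c} :=
    ⟨π, hplan, by rw [hcost, habs]⟩
  exact IsLeast.csInf_eq ⟨hmem, hlb⟩

end OllivierRicci
/-- the case `|△(x,y)| = d - 1`. -/
theorem OllivierRicci.kappa_of_triangle_eq_pred {V : Type*} (G : SimpleGraph V)
    (hlf : G.LocallyFinite) (hconn : G.Connected) (x y : V) (hadj : G.Adj x y)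
    (d : ℕ) (hdx : (G.neighborSet x).ncard = d) (hdy : (G.neighborSet y).ncard = d)
    (htri : (OllivierRicci.triangleSet G x y).ncard = d - 1) :
    OllivierRicci.kappaAlpha G 0 x y = ((d : ℝ) - 1) / d ∧
      OllivierRicci.kappa G x y = ((d : ℝ) + 1) / d ∧
      OllivierRicci.kappaAlpha G 0 x y = OllivierRicci.kappa G x y - 2 / d := by
  haveI := hlf x
  have hfx : (G.neighborSet x).Finite := Set.toFinite _
  have hd0 : 0 < d := by
    rw [← hdx]; exact (Set.ncard_pos hfx).mpr ⟨y, hadj⟩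
  have hdR : (0 : ℝ) < d := by exact_mod_cast hd0
  have hd1R : (1 : ℝ) ≤ d := by exact_mod_cast hd0
  have hdxy : G.dist x y = 1 := SimpleGraph.dist_eq_one_iff_adj.mpr hadj
  have hk0 : kappaAlpha G 0 x y = ((d : ℝ) - 1) / d := by
    rw [kappaAlpha, hdxy, W1_eval G hlf hconn x y hadj d hdx hdy htri 0 le_rfl zero_le_one]
    rw [zero_sub, abs_neg, abs_of_nonneg (by positivity)]
    push_cast
    field_simp
    ring
  have hev : ∀ᶠ α in nhdsWithin (1 : ℝ) (Set.Iio 1),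
      kappaAlpha G α x y / (1 - α) = ((d : ℝ) + 1) / d := by
    filter_upwards [Ioo_mem_nhdsLT_of_mem (by norm_num : (1 : ℝ) ∈ Set.Ioc (1/2 : ℝ) 1)]
      with α hα
    obtain ⟨hα1, hα2⟩ := hα
    have h0 : (0 : ℝ) ≤ α := by linarith
    have h1 : α ≤ 1 := le_of_lt hα2
    have hblt : (1 - α) / d ≤ 1 - α := div_le_self (by linarith) hd1R
    have habs : |α - (1 - α) / d| = α - (1 - α) / d := abs_of_nonneg (by linarith)
    rw [kappaAlpha, hdxy, W1_eval G hlf hconn x y hadj d hdx hdy htri α h0 h1, habs]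
    have h1α : (1 : ℝ) - α ≠ 0 := by linarith
    push_cast
    field_simp
    ring
  have htend : Filter.Tendsto (fun α => kappaAlpha G α x y / (1 - α))
      (nhdsWithin (1 : ℝ) (Set.Iio 1)) (nhds (((d : ℝ) + 1) / d)) :=
    Filter.Tendsto.congr' (Filter.EventuallyEq.symm hev) tendsto_const_nhds
  have hk : kappa G x y = ((d : ℝ) + 1) / d := by
    rw [kappa]
    exact htend.limUnder_eq
  refine ⟨hk0, hk, ?_⟩
  rw [hk0, hk, div_sub_div_same]
  ring_nf
end
end
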